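/- arXiv:math/0510369 — 9 statements merged into one kernel-verified Lean document; each statement's English description precedes it below -/
import Mathlib

section
/- Let I be a set of integers and let a : I × I → ℤ be a family of integers. Suppose that for all i, j, k ∈ I the congruence a(i,j) + a(j,k) ≡ a(i,k) holds modulo the ideal of ℤ generated by i, j and k (equivalently, gcd(i, gcd(j, k)) divides a(i,j) + a(j,k) − a(i,k)). Then there exists a family x : I → ℤ such that for all i, j ∈ I one has x(j) − x(i) ≡ a(i,j) modulo the ideal generated by i and j (equivalently, gcd(i, j) divides x(j) − x(i) − a(i,j)). -/
lemma natB (a b m : ℕ) : Nat.gcd (Nat.lcm a b) m ∣ Nat.lcm (Nat.gcd a m) (Nat.gcd b m) := by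
  rcases eq_or_ne m 0 with rfl | hm
  · simp
  rcases eq_or_ne a 0 with rfl | ha
  · simpa using Nat.dvd_lcm_left m (Nat.gcd b m)
  rcases eq_or_ne b 0 with rfl | hb
  · simpa using Nat.dvd_lcm_right (Nat.gcd a m) m
  have h1 : Nat.gcd (Nat.lcm a b) m ≠ 0 := Nat.gcd_ne_zero_right hm
  have h2 : Nat.lcm (Nat.gcd a m) (Nat.gcd b m) ≠ 0 :=
    Nat.lcm_ne_zero (Nat.gcd_ne_zero_right hm) (Nat.gcd_ne_zero_right hm)
  rw [← Nat.factorization_le_iff_dvd h1 h2,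
    Nat.factorization_gcd (Nat.lcm_ne_zero ha hb) hm,
    Nat.factorization_lcm ha hb,
    Nat.factorization_lcm (Nat.gcd_ne_zero_right hm) (Nat.gcd_ne_zero_right hm),
    Nat.factorization_gcd ha hm, Nat.factorization_gcd hb hm]
  intro p
  simp only [Finsupp.inf_apply, Finsupp.sup_apply]
  omega

lemma intB (a b m : ℤ) : gcd (lcm a b) m ∣ lcm (gcd a m) (gcd b m) := by
  rw [← Int.natAbs_dvd_natAbs]
  have e1 : (gcd (lcm a b) m).natAbs = Nat.gcd (Nat.lcm a.natAbs b.natAbs) m.natAbs := by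
    rfl
  have e2 : (lcm (gcd a m) (gcd b m)).natAbs
      = Nat.lcm (Nat.gcd a.natAbs m.natAbs) (Nat.gcd b.natAbs m.natAbs) := by
    rfl
  rw [e1, e2]
  exact natB _ _ _

lemma two_cong (m n u v : ℤ) (h : gcd m n ∣ v - u) :
    ∃ x : ℤ, m ∣ x - u ∧ n ∣ x - v := by
  rw [← Int.coe_gcd] at h
  obtain ⟨t, ht⟩ := h
  have hg := Int.gcd_eq_gcd_ab m n
  refine ⟨u + m * Int.gcdA m n * t, ⟨Int.gcdA m n * t, by ring⟩, ⟨-Int.gcdB m n * t, ?_⟩⟩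
  linear_combination -ht - t * hg

lemma dvd_foldr_lcm (l : List ℤ) (x : ℤ) (hx : x ∈ l) : x ∣ l.foldr lcm 1 := by
  induction l with
  | nil => cases hx
  | cons y t ih =>
    rcases List.mem_cons.1 hx with rfl | hx
    · exact dvd_lcm_left _ _
    · exact (ih hx).trans (dvd_lcm_right _ _)

lemma list_crt (l : List (ℤ × ℤ))
    (hcomp : ∀ p ∈ l, ∀ q ∈ l, gcd p.1 q.1 ∣ q.2 - p.2) :
    ∃ x : ℤ, (∀ p ∈ l, p.1 ∣ x - p.2) ∧
      ∀ m c : ℤ, (∀ p ∈ l, gcd p.1 m ∣ c - p.2) →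
        gcd ((l.map Prod.fst).foldr lcm 1) m ∣ c - x := by
  induction l with
  | nil =>
    refine ⟨0, by simp, fun m c _ => ?_⟩
    simp only [List.map_nil, List.foldr_nil]
    rw [gcd_one_left]
    exact one_dvd _
  | cons p₀ t ih =>
    have htcomp : ∀ p ∈ t, ∀ q ∈ t, gcd p.1 q.1 ∣ q.2 - p.2 := fun p hp q hq =>
      hcomp p (List.mem_cons_of_mem _ hp) q (List.mem_cons_of_mem _ hq)
    obtain ⟨y, hy1, hy2⟩ := ih htcomp
    set Lt := (t.map Prod.fst).foldr lcm 1 with hLt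
    have hkey : gcd Lt p₀.1 ∣ p₀.2 - y := by
      refine hy2 p₀.1 p₀.2 (fun p hp => ?_)
      exact hcomp p (List.mem_cons_of_mem _ hp) p₀ List.mem_cons_self
    obtain ⟨x, hx1, hx2⟩ := two_cong Lt p₀.1 y p₀.2 hkey
    refine ⟨x, ?_, ?_⟩
    · intro p hp
      rcases List.mem_cons.1 hp with rfl | hp
      · exact hx2
      · have h1 : p.1 ∣ x - y := (dvd_foldr_lcm _ _ (List.mem_map_of_mem (f := Prod.fst) hp)).trans hx1
        have h2 := hy1 p hp
        have he : x - p.2 = (x - y) + (y - p.2) := by ring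
        rw [he]; exact dvd_add h1 h2
    · intro m c hc
      simp only [List.map_cons, List.foldr_cons]
      refine (intB p₀.1 Lt m).trans (lcm_dvd ?_ ?_)
      · have h1 : gcd p₀.1 m ∣ c - p₀.2 := hc p₀ List.mem_cons_self
        have h2 : gcd p₀.1 m ∣ p₀.2 - x := (gcd_dvd_left _ _).trans (dvd_sub_comm.mp hx2)
        have he : c - x = (c - p₀.2) + (p₀.2 - x) := by ring
        rw [he]; exact dvd_add h1 h2
      · have h1 : gcd Lt m ∣ c - y := hy2 m c (fun p hp => hc p (List.mem_cons_of_mem _ hp))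
        have h2 : gcd Lt m ∣ x - y := (gcd_dvd_left _ _).trans hx1
        have he : c - x = (c - y) - (x - y) := by ring
        rw [he]; exact dvd_sub h1 h2

lemma natG (x y z : ℕ) : Nat.gcd (Nat.gcd x z) (Nat.gcd y z) = Nat.gcd x (Nat.gcd y z) := by
  rw [Nat.gcd_assoc x z _]
  congr 1
  rw [Nat.gcd_comm y z, ← Nat.gcd_assoc, Nat.gcd_self, Nat.gcd_comm]


/-- **Integral congruences, n = 1.**
Let `I` be a set of integers and `a : I × I → ℤ`. If for all `i, j, k ∈ I`
the gcd of `i, j, k` divides `a i j + a j k - a i k` (i.e. the congruence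
`a(i,j) + a(j,k) ≡ a(i,k)` holds modulo the ideal `(i,j,k)`), then there is a
family `x : I → ℤ` with `x j - x i ≡ a i j` modulo the ideal `(i,j)`. -/
theorem integral_congruences_deg_one (I : Set ℤ) (a : I → I → ℤ)
    (h : ∀ i j k : I,
      (Int.gcd (i : ℤ) (Int.gcd (j : ℤ) (k : ℤ)) : ℤ) ∣ a i j + a j k - a i k) :
    ∃ x : I → ℤ, ∀ i j : I, (Int.gcd (i : ℤ) (j : ℤ) : ℤ) ∣ x j - x i - a i j := by
  classical
  have hgg : ∀ i j k : I, Int.gcd (i : ℤ) (Int.gcd (j : ℤ) (k : ℤ) : ℤ)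
      = Nat.gcd (i : ℤ).natAbs (Nat.gcd (j : ℤ).natAbs (k : ℤ).natAbs) := fun i j k => rfl
  have fact1 : ∀ i : I, (((i : ℤ).natAbs : ℤ)) ∣ a i i := by
    intro i
    have hi := h i i i
    rw [hgg] at hi
    simpa [Nat.gcd_self] using hi
  have fact2 : ∀ i j : I, ((Int.gcd (i : ℤ) (j : ℤ) : ℕ) : ℤ) ∣ a i j + a j i := by
    intro i j
    have h1 := h i j i
    rw [hgg, Nat.gcd_comm (j : ℤ).natAbs, ← Nat.gcd_assoc, Nat.gcd_self] at h1
    have h2 : ((Int.gcd (i : ℤ) (j : ℤ) : ℕ) : ℤ) ∣ a i i :=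
      (Int.natCast_dvd_natCast.mpr (Nat.gcd_dvd_left _ _)).trans (fact1 i)
    have he : a i j + a j i = (a i j + a j i - a i i) + a i i := by ring
    rw [he]
    exact dvd_add h1 h2
  by_cases h0 : (0 : ℤ) ∈ I
  · -- explicit solution x i = a z i with z = 0
    set z : I := ⟨0, h0⟩ with hz
    refine ⟨fun i => a z i, fun i j => ?_⟩
    have hz0 : ((z : I) : ℤ) = 0 := rfl
    have h1 := h i z j
    rw [hgg] at h1
    simp only [hz0, Int.natAbs_zero, Nat.gcd_zero_left] at h1
    -- h1 : ↑(gcd i j) ∣ a i z + a z j - a i j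
    have h2 : ((Int.gcd (i : ℤ) (j : ℤ) : ℕ) : ℤ) ∣ a z i + a i z := by
      have := fact2 z i
      rw [Int.gcd_def] at this
      simp only [hz0, Int.natAbs_zero, Nat.gcd_zero_left] at this
      exact ((Int.natCast_dvd_natCast.mpr (Nat.gcd_dvd_left _ _)).trans this)
    have he : a z j - a z i - a i j = (a i z + a z j - a i j) - (a z i + a i z) := by ring
    rw [he]
    exact dvd_sub h1 h2
  · -- Zorn's lemma
    have hne : ∀ i : I, ((i : ℤ)).natAbs ≠ 0 := by
      intro i hi
      exact h0 (by simpa [Int.natAbs_eq_zero.mp hi] using i.2)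
    set P : Set (Set (I × ℤ)) :=
      {S | ∀ p ∈ S, ∀ q ∈ S,
        ((Int.gcd (p.1 : ℤ) (q.1 : ℤ) : ℕ) : ℤ) ∣ q.2 - p.2 - a p.1 q.1} with hP
    obtain ⟨M, hM⟩ := zorn_subset P (by
      intro c hc hchain
      refine ⟨⋃₀ c, ?_, fun s hs => Set.subset_sUnion_of_mem hs⟩
      rintro p ⟨s, hs, hps⟩ q ⟨t, ht, hqt⟩
      rcases hchain.total hs ht with hst | hts
      · exact hc ht p (hst hps) q hqt
      · exact hc hs p hps q (hts hqt))
    have hMP : M ∈ P := hM.prop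
    -- totality of M
    have htot : ∀ k : I, ∃ u : ℤ, ((k, u) : I × ℤ) ∈ M := by
      intro k
      by_contra hk
      push_neg at hk
      set T : Set (ℤ × ℤ) :=
        (fun p : I × ℤ => (((Int.gcd (p.1 : ℤ) (k : ℤ) : ℕ) : ℤ), p.2 + a p.1 k)) '' M with hT
      have hTcomp : ∀ q ∈ T, ∀ q' ∈ T, gcd q.1 q'.1 ∣ q'.2 - q.2 := by
        rintro _ ⟨p, hp, rfl⟩ _ ⟨p', hp', rfl⟩
        have hg : gcd ((Int.gcd (p.1 : ℤ) (k : ℤ) : ℕ) : ℤ) ((Int.gcd (p'.1 : ℤ) (k : ℤ) : ℕ) : ℤ)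
            = ((Nat.gcd (p.1 : ℤ).natAbs (Nat.gcd (p'.1 : ℤ).natAbs (k : ℤ).natAbs) : ℕ) : ℤ) := by
          rw [← Int.coe_gcd, Int.gcd_natCast_natCast, Int.gcd_def, Int.gcd_def, natG]
        rw [hg]
        have h1 := hMP p hp p' hp'
        have h2 := h p.1 p'.1 k
        rw [hgg] at h2
        have h1' : ((Nat.gcd (p.1 : ℤ).natAbs (Nat.gcd (p'.1 : ℤ).natAbs (k : ℤ).natAbs) : ℕ) : ℤ)
            ∣ p'.2 - p.2 - a p.1 p'.1 := by
          refine (Int.natCast_dvd_natCast.mpr ?_).trans h1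
          rw [Int.gcd_def]
          exact Nat.dvd_gcd (Nat.gcd_dvd_left _ _)
            ((Nat.gcd_dvd_right _ _).trans (Nat.gcd_dvd_left _ _))
        have he : (p'.2 + a p'.1 k) - (p.2 + a p.1 k)
            = (p'.2 - p.2 - a p.1 p'.1) + (a p.1 p'.1 + a p'.1 k - a p.1 k) := by ring
        rw [he]
        exact dvd_add h1' h2
      have himg : Prod.fst '' T ⊆ (fun n : ℕ => (n : ℤ)) '' ((k : ℤ).natAbs.divisors : Set ℕ) := by
        rintro _ ⟨_, ⟨p, hp, rfl⟩, rfl⟩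
        exact ⟨Int.gcd (p.1 : ℤ) (k : ℤ), by
          simp only [Finset.coe_sort_coe, Finset.mem_coe, Nat.mem_divisors]
          exact ⟨Nat.gcd_dvd_right _ _, hne k⟩, rfl⟩
      have hfin : (Prod.fst '' T).Finite :=
        (((k : ℤ).natAbs.divisors.finite_toSet).image _).subset himg
      have hrep : ∀ d : ℤ, ∃ c : ℤ, d ∈ Prod.fst '' T → (d, c) ∈ T := by
        intro d
        by_cases hd : d ∈ Prod.fst '' T
        · obtain ⟨q, hq, rfl⟩ := hd
          exact ⟨q.2, fun _ => hq⟩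
        · exact ⟨0, fun hx => absurd hx hd⟩
      choose rep hrep using hrep
      set T' : Set (ℤ × ℤ) := (fun d => (d, rep d)) '' (Prod.fst '' T) with hT'
      have hT'sub : T' ⊆ T := by rintro _ ⟨d, hd, rfl⟩; exact hrep d hd
      have hT'fin : T'.Finite := hfin.image _
      set l := hT'fin.toFinset.toList with hldef
      have hl : ∀ q, q ∈ l ↔ q ∈ T' := by
        intro q; rw [hldef, Finset.mem_toList, Set.Finite.mem_toFinset]
      obtain ⟨x, hx, -⟩ := list_crt l (fun p hp q hq =>
        hTcomp p (hT'sub ((hl p).mp hp)) q (hT'sub ((hl q).mp hq)))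
      -- x satisfies all constraints from M
      have hxall : ∀ p ∈ M, ((Int.gcd (p.1 : ℤ) (k : ℤ) : ℕ) : ℤ) ∣ x - p.2 - a p.1 k := by
        intro p hp
        set d : ℤ := ((Int.gcd (p.1 : ℤ) (k : ℤ) : ℕ) : ℤ) with hd
        have hdT : d ∈ Prod.fst '' T := ⟨_, ⟨p, hp, rfl⟩, rfl⟩
        have hrepT : (d, rep d) ∈ T := hrep d hdT
        have h1 : d ∣ x - rep d := hx (d, rep d) ((hl _).mpr ⟨d, hdT, rfl⟩)
        have h2 : gcd d d ∣ (p.2 + a p.1 k) - rep d :=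
          hTcomp (d, rep d) hrepT _ ⟨p, hp, rfl⟩
        have hgdd : gcd d d = d := by
          rw [hd, ← Int.coe_gcd, Int.gcd_natCast_natCast, Nat.gcd_self]
        rw [hgdd] at h2
        have he : x - p.2 - a p.1 k = (x - rep d) - ((p.2 + a p.1 k) - rep d) := by ring
        rw [he]
        exact dvd_sub h1 h2
      -- extend M
      have hM' : insert ((k, x) : I × ℤ) M ∈ P := by
        rintro p (rfl | hp) q (rfl | hq)
        · have hk1 : ((Int.gcd (k : ℤ) (k : ℤ) : ℕ) : ℤ) ∣ a k k := by
            rw [Int.gcd_self]; exact fact1 k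
          have he : x - x - a k k = -(a k k) := by ring
          rw [he]
          exact hk1.neg_right
        · have h1 := hxall q hq
          have h2 := fact2 q.1 k
          have he : q.2 - x - a k q.1
              = -((x - q.2 - a q.1 k)) - (a q.1 k + a k q.1) := by ring
          rw [he, Int.gcd_comm]
          exact dvd_sub h1.neg_right h2
        · exact hxall p hp
        · exact hMP p hp q hq
      have hsub : insert ((k, x) : I × ℤ) M ⊆ M :=
        hM.2 hM' (Set.subset_insert _ _)
      exact hk x (hsub (Set.mem_insert _ _))
    choose xf hxf using htot
    exact ⟨xf, fun i j => hMP (i, xf i) (hxf i) (j, xf j) (hxf j)⟩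
end

section
/- Let n be a positive integer, I a set of integers, and a a family of integers indexed by (n+1)-tuples (i₀, …, iₙ) ∈ I^{n+1}. Suppose that for all i₀, …, i_{n+1} ∈ I the alternating sum Σ_{j=0}^{n+1} (−1)^j a(i₀, …, î_j, …, i_{n+1}) (where î_j means that the entry i_j is omitted) lies in the ideal of ℤ generated by i₀, …, i_{n+1} (equivalently, is divisible by gcd(i₀, …, i_{n+1})). Then there exists a family x of integers indexed by n-tuples of elements of I such that for all i₀, …, iₙ ∈ I the difference Σ_{j=0}^{n} (−1)^j x(i₀, …, î_j, …, iₙ) − a(i₀, …, iₙ) lies in the ideal of ℤ generated by i₀, …, iₙ (equivalently, is divisible by gcd(i₀, …, iₙ)). -/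
section IntegralCongruencesAux

lemma ic_sa_sa {m : ℕ} (i j : Fin (m + 1)) (h : (i : ℕ) ≤ (j : ℕ)) (t : Fin m) :
    (Fin.castSucc i).succAbove (j.succAbove t) = (Fin.succ j).succAbove (i.succAbove t) := by
  simp only [Fin.succAbove, Fin.lt_def]
  apply Fin.ext
  split_ifs <;> simp_all [Fin.lt_def] <;> omega

lemma ic_dd {α : Type*} {m : ℕ} (F : (Fin m → α) → ℤ) (i : Fin (m + 2) → α) :
    ∑ j : Fin (m + 2), ∑ s : Fin (m + 1),
      (-1 : ℤ) ^ ((j : ℕ) + (s : ℕ)) * F (fun t => i (j.succAbove (s.succAbove t))) = 0 := by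
  rw [← Finset.sum_product' (Finset.univ : Finset (Fin (m+2))) (Finset.univ : Finset (Fin (m+1)))
      (fun j s => (-1 : ℤ) ^ ((j : ℕ) + (s : ℕ)) * F (fun t => i (j.succAbove (s.succAbove t))))]
  refine Finset.sum_involution
    (fun p _ => if hlt : (p.2 : ℕ) < (p.1 : ℕ)
      then (⟨(p.2 : ℕ), by omega⟩, ⟨(p.1 : ℕ) - 1, by have := p.1.isLt; omega⟩)
      else (Fin.succ p.2, ⟨(p.1 : ℕ), by have := p.2.isLt; omega⟩))
    ?_ ?_ (fun a ha => by simp) ?_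
  · rintro ⟨j, s⟩ -
    by_cases hlt : (s : ℕ) < (j : ℕ)
    · simp only [dif_pos hlt]
      have hcomp : ∀ t : Fin m, i (j.succAbove (s.succAbove t)) =
          i ((⟨(s : ℕ), by omega⟩ : Fin (m + 2)).succAbove
            ((⟨(j : ℕ) - 1, by have := j.isLt; omega⟩ : Fin (m + 1)).succAbove t)) := by
        intro t
        congr 1
        have h1 := ic_sa_sa s ⟨(j : ℕ) - 1, by have := j.isLt; omega⟩ (by simp; omega) t
        have h2 : Fin.succ (⟨(j : ℕ) - 1, by have := j.isLt; omega⟩ : Fin (m + 1)) = j := by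
          apply Fin.ext; simp; omega
        have h3 : Fin.castSucc s = (⟨(s : ℕ), by omega⟩ : Fin (m + 2)) := by
          apply Fin.ext; simp
        rw [h2, h3] at h1
        exact h1.symm
      simp only [← hcomp]
      have hexp : (j : ℕ) + (s : ℕ) = ((s : ℕ) + ((j : ℕ) - 1)) + 1 := by omega
      rw [hexp, pow_succ]
      ring
    · simp only [dif_neg hlt]
      have hcomp : ∀ t : Fin m, i (j.succAbove (s.succAbove t)) =
          i ((Fin.succ s).succAbove
            ((⟨(j : ℕ), by have := s.isLt; omega⟩ : Fin (m + 1)).succAbove t)) := by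
        intro t
        congr 1
        have h1 := ic_sa_sa (⟨(j : ℕ), by have := s.isLt; omega⟩ : Fin (m + 1)) s
          (by simpa using Nat.le_of_not_lt hlt) t
        have h3 : Fin.castSucc (⟨(j : ℕ), by have := s.isLt; omega⟩ : Fin (m + 1)) = j := by
          apply Fin.ext; simp
        rw [h3] at h1
        exact h1
      simp only [← hcomp]
      have hexp : ((Fin.succ s : Fin (m+2)) : ℕ) + ((j : ℕ)) = ((j : ℕ) + (s : ℕ)) + 1 := by
        simp; omega
      rw [hexp, pow_succ]
      ring
  · rintro ⟨j, s⟩ - -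
    by_cases hlt : (s : ℕ) < (j : ℕ) <;> simp only [dif_pos, dif_neg, hlt]
    · intro hc
      have := congrArg (fun p => ((p.1 : Fin (m+2)) : ℕ)) hc
      simp at this; omega
    · intro hc
      have h4 := congrArg (fun p => ((p.2 : Fin (m+1)) : ℕ)) hc
      simp at h4
      have h5 := congrArg (fun p => ((p.1 : Fin (m+2)) : ℕ)) hc
      simp at h5; omega
  · rintro ⟨j, s⟩ -
    by_cases hlt : (s : ℕ) < (j : ℕ)
    · simp only [dif_pos hlt]
      have hb : ¬ ((⟨(j : ℕ) - 1, by have := j.isLt; omega⟩ : Fin (m + 1)) : ℕ) <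
          ((⟨(s : ℕ), by omega⟩ : Fin (m + 2)) : ℕ) := by simp; omega
      simp only [dif_neg hb]
      refine Prod.ext ?_ ?_ <;> apply Fin.ext <;> simp <;> omega
    · simp only [dif_neg hlt]
      have hb : ((⟨(j : ℕ), by have := s.isLt; omega⟩ : Fin (m + 1)) : ℕ) <
          ((Fin.succ s : Fin (m+2)) : ℕ) := by simp; omega
      simp only [dif_pos hb]
      refine Prod.ext ?_ ?_ <;> apply Fin.ext <;> simp

lemma ic_cons_comp {α : Type*} {q : ℕ} (c : α) (i : Fin (q + 1) → α) (J : Fin (q + 1)) :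
    (fun t => (Fin.cons c i : Fin (q + 2) → α) ((J.succ).succAbove t)) =
      Fin.cons c (fun t => i (J.succAbove t)) := by
  funext t
  induction t using Fin.cases with
  | zero => simp
  | succ t' => simp [Fin.succ_succAbove_succ]

lemma ic_crt {ι : Type*} [DecidableEq ι] (S : Finset ι) (mo t : ι → ℤ)
    (hco : ∀ p ∈ S, ∀ q ∈ S, p ≠ q → IsCoprime (mo p) (mo q)) :
    ∃ z : ℤ, ∀ p ∈ S, mo p ∣ z - t p := by
  induction S using Finset.induction_on with
  | empty => exact ⟨0, by simp⟩
  | insert _ _ hx ih =>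
    rename_i b S
    obtain ⟨z, hz⟩ := ih (fun p hp q hq hpq => hco p (Finset.mem_insert_of_mem hp) q
      (Finset.mem_insert_of_mem hq) hpq)
    have hcop : IsCoprime (mo b) (∏ p ∈ S, mo p) :=
      IsCoprime.prod_right fun p hp => hco b (Finset.mem_insert_self _ _) p
        (Finset.mem_insert_of_mem hp) (fun he => hx (he ▸ hp))
    obtain ⟨u, v, huv⟩ := hcop
    refine ⟨z + (∏ p ∈ S, mo p) * (v * (t b - z)), ?_⟩
    intro p hp
    rcases Finset.mem_insert.1 hp with rfl | hp
    · exact ⟨(z - t p) * u, by linear_combination (-(z - t p)) * huv⟩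
    · have h1 : mo p ∣ z - t p := hz p hp
      have h2 : mo p ∣ (∏ q ∈ S, mo q) * (v * (t b - z)) :=
        Dvd.dvd.mul_right (Finset.dvd_prod_of_mem mo hp) _
      have h3 : z + (∏ q ∈ S, mo q) * (v * (t b - z)) - t p
          = (z - t p) + (∏ q ∈ S, mo q) * (v * (t b - z)) := by ring
      rw [h3]
      exact dvd_add h1 h2

lemma ic_gcd_mem_span_image {ι : Type*} [DecidableEq ι] (s : Finset ι) (f : ι → ℤ) :
    s.gcd f ∈ Ideal.span (f '' s) := by
  induction s using Finset.induction_on with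
  | empty => simp [Finset.gcd_empty]
  | insert _ _ hx ih =>
    rename_i b s
    rw [Finset.gcd_insert]
    have h1 : Ideal.span {f b, s.gcd f} ≤ Ideal.span (f '' ↑(insert b s)) := by
      rw [Ideal.span_le]
      rintro z (rfl | rfl)
      · exact Ideal.subset_span ⟨b, by simp, rfl⟩
      · refine Ideal.span_mono (Set.image_mono ?_) ih
        simp [Finset.coe_subset, Finset.subset_insert]
    exact h1 (by rw [← span_gcd]; exact Ideal.subset_span rfl)

lemma ic_mem_span_iff {q : ℕ} (f : Fin q → ℤ) (z : ℤ) :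
    z ∈ Ideal.span (Set.range f) ↔ Finset.univ.gcd f ∣ z := by
  constructor
  · intro hz
    have hle : Ideal.span (Set.range f) ≤ Ideal.span {Finset.univ.gcd f} := by
      rw [Ideal.span_le]
      rintro _ ⟨k, rfl⟩
      exact Ideal.mem_span_singleton.2 (Finset.gcd_dvd (Finset.mem_univ k))
    exact Ideal.mem_span_singleton.1 (hle hz)
  · rintro ⟨t, rfl⟩
    have h2 := ic_gcd_mem_span_image (Finset.univ : Finset (Fin q)) f
    rw [Finset.coe_univ, Set.image_univ] at h2
    exact Ideal.mul_mem_right _ _ h2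

lemma ic_pow_dvd_iff {p : ℕ} (hp : p.Prime) {z : ℤ} (hz : z ≠ 0) (e : ℕ) :
    ((p : ℤ)) ^ e ∣ z ↔ e ≤ z.natAbs.factorization p := by
  have h1 : ((p : ℤ)) ^ e ∣ z ↔ (p ^ e : ℕ) ∣ z.natAbs := by
    rw [← Int.natAbs_dvd_natAbs]; simp [Int.natAbs_pow]
  rw [h1, Nat.Prime.pow_dvd_iff_le_factorization hp (by simpa using hz)]

lemma ic_dvd_of_prime_pows {g D : ℤ} (hg : g ≠ 0)
    (hD : ∀ p ∈ g.natAbs.primeFactors, ((p : ℤ)) ^ (g.natAbs.factorization p) ∣ D) : g ∣ D := by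
  have hgn : g.natAbs ≠ 0 := by simpa using hg
  rw [← Int.natAbs_dvd]
  have h1 : (g.natAbs : ℤ) = ∏ p ∈ g.natAbs.primeFactors, ((p : ℤ)) ^ (g.natAbs.factorization p) := by
    have h2 : g.natAbs = ∏ p ∈ g.natAbs.primeFactors, p ^ (g.natAbs.factorization p) := by
      rw [← Nat.support_factorization]
      exact (Nat.factorization_prod_pow_eq_self hgn).symm
    conv_lhs => rw [h2]
    simp [Nat.cast_prod, Nat.cast_pow]
  rw [h1]
  refine Finset.prod_dvd_of_coprime ?_ hD
  intro p hp q hq hpq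
  have hpp := Nat.prime_of_mem_primeFactors hp
  have hqp := Nat.prime_of_mem_primeFactors hq
  have hco : IsCoprime ((p:ℤ)) ((q:ℤ)) := by
    rw [Nat.isCoprime_iff_coprime]
    exact (Nat.coprime_primes hpp hqp).2 (by simpa using hpq)
  exact (hco.pow : IsCoprime _ _)

lemma ic_pows_coprime {p q : ℕ} (hp : p.Prime) (hq : q.Prime) (hpq : p ≠ q) (e f : ℕ) :
    IsCoprime (((p:ℤ)) ^ e) (((q:ℤ)) ^ f) := by
  have hco : IsCoprime ((p:ℤ)) ((q:ℤ)) := by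
    rw [Nat.isCoprime_iff_coprime]
    exact (Nat.coprime_primes hp hq).2 hpq
  exact hco.pow

noncomputable def icXdef {α : Type*} {m : ℕ} (a : (Fin (m + 2) → α) → ℤ) (c : ℕ → α)
    (N : ℕ) (k : Fin (m + 1) → α) : ℤ :=
  a (Fin.cons (c N) k) + ∑ r ∈ Finset.range N, ∑ s : Fin (m + 1),
    (-1 : ℤ) ^ (s : ℕ) * a (Fin.cons (c r) (Fin.cons (c (r + 1)) (fun t => k (s.succAbove t))))

lemma ic_xdef_succ {α : Type*} {m : ℕ} (a : (Fin (m + 2) → α) → ℤ) (c : ℕ → α)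
    (N : ℕ) (k : Fin (m + 1) → α) :
    icXdef a c (N + 1) k - icXdef a c N k =
      ∑ J : Fin (m + 1 + 2), (-1 : ℤ) ^ (J : ℕ) *
        a (fun t => (Fin.cons (c N) (Fin.cons (c (N + 1)) k) : Fin (m + 1 + 2) → α)
          (J.succAbove t)) := by
  rw [Fin.sum_univ_succ, Fin.sum_univ_succ]
  have e0 : (fun t => (Fin.cons (c N) (Fin.cons (c (N + 1)) k) : Fin (m + 1 + 2) → α)
      ((0 : Fin (m + 1 + 2)).succAbove t)) = Fin.cons (c (N + 1)) k := by
    funext t; simp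
  rw [e0]
  simp only [ic_cons_comp]
  have e1 : (fun t => (Fin.cons (c (N + 1)) k : Fin (m + 2) → α)
      ((0 : Fin (m + 2)).succAbove t)) = k := by
    funext t; simp
  rw [e1]
  simp only [icXdef, Finset.sum_range_succ, Fin.val_succ, Fin.val_zero, pow_zero, one_mul,
    pow_succ]
  rw [Finset.sum_congr rfl (fun (s : Fin (m+1)) (_ : s ∈ (Finset.univ : Finset (Fin (m+1)))) => show
      (-1:ℤ)^(s:ℕ) * -1 * -1 * a (Fin.cons (c N) (Fin.cons (c (N+1)) fun t => k (s.succAbove t)))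
      = (-1:ℤ)^(s:ℕ) * a (Fin.cons (c N) (Fin.cons (c (N+1)) fun t => k (s.succAbove t))) by ring)]
  ring

lemma ic_xdef_delta {α : Type*} {m : ℕ} (a : (Fin (m + 2) → α) → ℤ) (c : ℕ → α)
    (N : ℕ) (i : Fin (m + 2) → α) :
    (∑ j : Fin (m + 2), (-1 : ℤ) ^ (j : ℕ) * icXdef a c N (fun t => i (j.succAbove t))) - a i =
      - ∑ J : Fin (m + 1 + 2), (-1 : ℤ) ^ (J : ℕ) *
        a (fun t => (Fin.cons (c N) i : Fin (m + 1 + 2) → α) (J.succAbove t)) := by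
  rw [Fin.sum_univ_succ (f := fun J : Fin (m + 1 + 2) => (-1 : ℤ) ^ (J : ℕ) *
        a (fun t => (Fin.cons (c N) i : Fin (m + 1 + 2) → α) (J.succAbove t)))]
  have e0 : (fun t => (Fin.cons (c N) i : Fin (m + 1 + 2) → α)
      ((0 : Fin (m + 1 + 2)).succAbove t)) = i := by
    funext t; simp
  rw [e0]
  simp only [ic_cons_comp, Fin.val_succ, Fin.val_zero, pow_zero, one_mul, pow_succ]
  simp only [icXdef, mul_add, Finset.sum_add_distrib]
  have hz : ∑ j : Fin (m + 2), (-1 : ℤ) ^ (j : ℕ) *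
      ∑ r ∈ Finset.range N, ∑ s : Fin (m + 1),
        (-1 : ℤ) ^ (s : ℕ) * a (Fin.cons (c r) (Fin.cons (c (r + 1))
          (fun t => i (j.succAbove (s.succAbove t))))) = 0 := by
    simp only [Finset.mul_sum]
    rw [Finset.sum_comm]
    refine Finset.sum_eq_zero (fun r _ => ?_)
    have h := ic_dd (fun u : Fin m → α => a (Fin.cons (c r) (Fin.cons (c (r+1)) u))) i
    rw [← h]
    refine Finset.sum_congr rfl (fun j _ => Finset.sum_congr rfl (fun s _ => ?_))
    rw [pow_add]
    ring
  rw [hz]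
  have e2 : ∑ x : Fin (m+1+1), (-1:ℤ)^(x:ℕ) * -1 * a (Fin.cons (c N) fun t => i (x.succAbove t))
      = - ∑ x : Fin (m+2), (-1:ℤ)^(x:ℕ) * a (Fin.cons (c N) fun t => i (x.succAbove t)) := by
    rw [← Finset.sum_neg_distrib]
    exact Finset.sum_congr rfl (fun x _ => by ring)
  rw [e2]
  ring

end IntegralCongruencesAux


/-- **Integral congruences, general degree.**
Let `n > 0`, `I` a set of integers, and `a` a family of integers indexed by
`(n+1)`-tuples from `I`. If for every `(n+2)`-tuple the alternating sum
`∑ j, (-1)^j * a(i₀,…,î_j,…,i_{n+1})` lies in the ideal of `ℤ` generated by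
`i₀,…,i_{n+1}`, then there is a family `x` indexed by `n`-tuples with
`∑ j, (-1)^j * x(i₀,…,î_j,…,iₙ) ≡ a(i₀,…,iₙ)` modulo the ideal `(i₀,…,iₙ)`. -/
theorem integral_congruences (n : ℕ) (hn : 0 < n) (I : Set ℤ)
    (a : (Fin (n + 1) → I) → ℤ)
    (h : ∀ i : Fin (n + 2) → I,
      (∑ j : Fin (n + 2), (-1 : ℤ) ^ (j : ℕ) * a (fun k => i (j.succAbove k)))
        ∈ Ideal.span (Set.range fun k => (i k : ℤ))) :
    ∃ x : (Fin n → I) → ℤ, ∀ i : Fin (n + 1) → I,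
      (∑ j : Fin (n + 1), (-1 : ℤ) ^ (j : ℕ) * x (fun k => i (j.succAbove k))) - a i
        ∈ Ideal.span (Set.range fun k => (i k : ℤ)) := by
  obtain ⟨m, rfl⟩ : ∃ m, n = m + 1 := ⟨n - 1, by omega⟩
  by_cases hne : Nonempty I
  case neg => exact ⟨fun _ => 0, fun i => absurd ⟨i 0⟩ hne⟩
  have hdvd : ∀ i' : Fin (m + 1 + 2) → I,
      Finset.univ.gcd (fun K => (i' K : ℤ)) ∣
        ∑ J : Fin (m + 1 + 2), (-1 : ℤ) ^ (J : ℕ) * a (fun k => i' (J.succAbove k)) :=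
    fun i' => (ic_mem_span_iff _ _).1 (h i')
  by_cases h0 : (0 : ℤ) ∈ I
  · -- cone at 0
    refine ⟨fun k => icXdef a (fun _ => (⟨0, h0⟩ : I)) 0 k, fun i => ?_⟩
    rw [ic_xdef_delta]
    rw [ic_mem_span_iff]
    refine dvd_trans ?_ (dvd_neg.2 (hdvd (Fin.cons (⟨0, h0⟩ : I) i)))
    apply Finset.dvd_gcd
    intro K _
    induction K using Fin.cases with
    | zero => simp
    | succ t => exact Finset.gcd_dvd (Finset.mem_univ t)
  · -- main case: all elements of I are nonzero
    have hnz : ∀ d : I, (d : ℤ) ≠ 0 := fun d hd => h0 (hd ▸ d.2)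
    have hGnz : ∀ {q : ℕ} (f : Fin (q + 1) → I), Finset.univ.gcd (fun K => (f K : ℤ)) ≠ 0 := by
      intro q f hg
      rw [Finset.gcd_eq_zero_iff] at hg
      exact hnz (f 0) (hg 0 (Finset.mem_univ 0))
    -- choose the sequences c p M
    have hcex : ∀ p M : ℕ, ∃ cc : I, ∀ d : I,
        min ((d : ℤ).natAbs.factorization p) M ≤ ((cc : ℤ).natAbs.factorization p) := by
      intro p M
      set f : I → ℕ := fun d => min ((d : ℤ).natAbs.factorization p) M with hf
      have hbdd : BddAbove (Set.range f) := ⟨M, by rintro _ ⟨d, rfl⟩; exact min_le_right _ _⟩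
      have hnemp : (Set.range f).Nonempty := Set.range_nonempty f
      obtain ⟨cc, hcc⟩ := Nat.sSup_mem hnemp hbdd
      refine ⟨cc, fun d => ?_⟩
      calc min ((d : ℤ).natAbs.factorization p) M = f d := rfl
        _ ≤ sSup (Set.range f) := le_csSup hbdd ⟨d, rfl⟩
        _ = f cc := hcc.symm
        _ ≤ (cc : ℤ).natAbs.factorization p := min_le_left _ _
    choose c hc using hcex
    -- define x by CRT over the primes dividing the gcd of each tuple
    have hxex : ∀ k : Fin (m + 1) → I, ∃ z : ℤ,
        ∀ p ∈ ((Finset.univ.gcd (fun t => (k t : ℤ))).natAbs).primeFactors,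
          ((p : ℤ)) ^ (((Finset.univ.gcd (fun t => (k t : ℤ))).natAbs).factorization p) ∣
            z - icXdef a (c p)
              (((Finset.univ.gcd (fun t => (k t : ℤ))).natAbs).factorization p) k := by
      intro k
      refine ic_crt _ _ _ ?_
      intro p hp q hq hpq
      exact ic_pows_coprime (Nat.prime_of_mem_primeFactors hp)
        (Nat.prime_of_mem_primeFactors hq) hpq _ _
    choose x hx using hxex
    refine ⟨x, fun i => ?_⟩
    rw [ic_mem_span_iff]
    apply ic_dvd_of_prime_pows (hGnz i)
    intro p hpmem
    have hp : p.Prime := Nat.prime_of_mem_primeFactors hpmem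
    set g : ℤ := Finset.univ.gcd (fun K => (i K : ℤ)) with hgdef
    set E : ℕ := g.natAbs.factorization p with hEdef
    -- the faces and their data
    set Nj : Fin (m + 1 + 1) → ℕ := fun j =>
      ((Finset.univ.gcd (fun t => ((fun t => i (j.succAbove t)) t : ℤ))).natAbs).factorization p
      with hNjdef
    set N : ℕ := Finset.univ.sup Nj with hNdef
    -- g divides each face gcd
    have hfg : ∀ j : Fin (m + 1 + 1),
        g ∣ Finset.univ.gcd (fun t => (i (j.succAbove t) : ℤ)) := fun j =>
      Finset.dvd_gcd (fun t _ => Finset.gcd_dvd (Finset.mem_univ _))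
    have hENj : ∀ j, E ≤ Nj j := by
      intro j
      have h1 : g.natAbs ∣ (Finset.univ.gcd (fun t => (i (j.succAbove t) : ℤ))).natAbs :=
        Int.natAbs_dvd_natAbs.2 (hfg j)
      have h2 := (Nat.factorization_le_iff_dvd (by simpa using hGnz i)
        (by simpa using hGnz (fun t => i (j.succAbove t)))).2 h1
      exact h2 p
    have hEN : E ≤ N := le_trans (hENj 0) (Finset.le_sup (Finset.mem_univ 0))
    -- p^E divides every entry of i
    have hpg : ((p : ℤ)) ^ E ∣ g := by
      have h1 : ((p ^ E : ℕ) : ℤ) ∣ (g.natAbs : ℤ) :=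
        Int.natCast_dvd_natCast.2 (Nat.ordProj_dvd _ _)
      have h2 : (g.natAbs : ℤ) ∣ g := Int.natAbs_dvd.2 dvd_rfl
      have := h1.trans h2
      simpa using this
    have hpi : ∀ K, ((p : ℤ)) ^ E ∣ (i K : ℤ) :=
      fun K => hpg.trans (Finset.gcd_dvd (Finset.mem_univ K))
    -- key: p^e divides c p M for suitable e
    have hvc : ∀ (M e : ℕ) (d : I), ((p : ℤ)) ^ e ∣ (d : ℤ) → e ≤ M →
        ((p : ℤ)) ^ e ∣ ((c p M : I) : ℤ) := by
      intro M e d hd heM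
      rw [ic_pow_dvd_iff hp (hnz _)]
      calc e ≤ min ((d : ℤ).natAbs.factorization p) M := by
              refine le_min ?_ heM
              exact (ic_pow_dvd_iff hp (hnz d) e).1 hd
        _ ≤ _ := hc p M d
    -- stability of icXdef in N
    have stab : ∀ (k : Fin (m + 1) → I) (M : ℕ),
        (((Finset.univ.gcd (fun t => (k t : ℤ))).natAbs).factorization p) ≤ M →
        ((p : ℤ)) ^ (((Finset.univ.gcd (fun t => (k t : ℤ))).natAbs).factorization p) ∣
          icXdef a (c p) M k - icXdef a (c p)
            (((Finset.univ.gcd (fun t => (k t : ℤ))).natAbs).factorization p) k := by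
      intro k M hM
      set e := ((Finset.univ.gcd (fun t => (k t : ℤ))).natAbs).factorization p with hedef
      induction M, hM using Nat.le_induction with
      | base => simp
      | succ M hM ih =>
        have hpk : ∀ t, ((p : ℤ)) ^ e ∣ (k t : ℤ) := by
          intro t
          have h1 : ((p : ℤ)) ^ e ∣ Finset.univ.gcd (fun t => (k t : ℤ)) := by
            have h2 : ((p ^ e : ℕ) : ℤ) ∣ ((Finset.univ.gcd (fun t => (k t : ℤ))).natAbs : ℤ) :=
              Int.natCast_dvd_natCast.2 (Nat.ordProj_dvd _ _)
            have h3 := h2.trans (Int.natAbs_dvd.2 (dvd_refl (Finset.univ.gcd (fun t => (k t : ℤ)))))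
            simpa using h3
          exact h1.trans (Finset.gcd_dvd (Finset.mem_univ t))
        have hstep : ((p : ℤ)) ^ e ∣ icXdef a (c p) (M + 1) k - icXdef a (c p) M k := by
          rw [ic_xdef_succ]
          refine dvd_trans ?_ (hdvd (Fin.cons (c p M) (Fin.cons (c p (M + 1)) k)))
          apply Finset.dvd_gcd
          intro K _
          induction K using Fin.cases with
          | zero => simpa using hvc M e (k 0) (hpk 0) hM
          | succ t =>
            induction t using Fin.cases with
            | zero => simpa using hvc (M + 1) e (k 0) (hpk 0) (le_trans hM (Nat.le_succ M))
            | succ t' => simpa using hpk t'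
        have h4 : icXdef a (c p) (M + 1) k - icXdef a (c p) e k =
            (icXdef a (c p) (M + 1) k - icXdef a (c p) M k) +
            (icXdef a (c p) M k - icXdef a (c p) e k) := by ring
        rw [h4]
        exact dvd_add hstep ih
    -- step A : p^E divides x(face j) - icXdef N (face j)
    have stepA : ∀ j : Fin (m + 1 + 1),
        ((p : ℤ)) ^ E ∣ x (fun t => i (j.succAbove t)) -
          icXdef a (c p) N (fun t => i (j.succAbove t)) := by
      intro j
      have hpmemj : p ∈ ((Finset.univ.gcd
          (fun t => (i (j.succAbove t) : ℤ))).natAbs).primeFactors := by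
        refine Nat.mem_primeFactors.2 ⟨hp, ?_, by simpa using hGnz (fun t => i (j.succAbove t))⟩
        exact dvd_trans (Nat.dvd_of_mem_primeFactors hpmem) (Int.natAbs_dvd_natAbs.2 (hfg j))
      have h1 := hx (fun t => i (j.succAbove t)) p hpmemj
      have h2 := stab (fun t => i (j.succAbove t)) N (Finset.le_sup (f := Nj) (Finset.mem_univ j))
      have h5 : x (fun t => i (j.succAbove t)) - icXdef a (c p) N (fun t => i (j.succAbove t)) =
          (x (fun t => i (j.succAbove t)) - icXdef a (c p) (Nj j) (fun t => i (j.succAbove t))) -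
          (icXdef a (c p) N (fun t => i (j.succAbove t)) -
            icXdef a (c p) (Nj j) (fun t => i (j.succAbove t))) := by ring
      refine dvd_trans (pow_dvd_pow _ (hENj j)) ?_
      rw [h5]
      exact dvd_sub h1 h2
    -- step B : main congruence for icXdef N
    have stepB : ((p : ℤ)) ^ E ∣
        (∑ j : Fin (m + 1 + 1), (-1 : ℤ) ^ (j : ℕ) *
          icXdef a (c p) N (fun t => i (j.succAbove t))) - a i := by
      rw [ic_xdef_delta]
      refine dvd_neg.2 (dvd_trans ?_ (hdvd (Fin.cons (c p N) i)))
      apply Finset.dvd_gcd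
      intro K _
      induction K using Fin.cases with
      | zero => simpa using hvc N E (i 0) (hpi 0) hEN
      | succ t => simpa using hpi t
    -- assemble
    have hsplit : (∑ j : Fin (m + 1 + 1), (-1 : ℤ) ^ (j : ℕ) *
          x (fun k => i (j.succAbove k))) - a i =
        (∑ j : Fin (m + 1 + 1), (-1 : ℤ) ^ (j : ℕ) *
          (x (fun t => i (j.succAbove t)) - icXdef a (c p) N (fun t => i (j.succAbove t)))) +
        ((∑ j : Fin (m + 1 + 1), (-1 : ℤ) ^ (j : ℕ) *
          icXdef a (c p) N (fun t => i (j.succAbove t))) - a i) := by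
      simp only [mul_sub, Finset.sum_sub_distrib]
      ring
    rw [hsplit]
    exact dvd_add (Finset.dvd_sum (fun j _ => Dvd.dvd.mul_left (stepA j) _)) stepB
end

section
/- Let V = ℚ³ and let L₀, L₁, L₂, L₃ be the four lines (1-dimensional ℚ-subspaces, regarded as additive subgroups) spanned by (1,0,0), (0,1,0), (0,0,1) and (1,1,1) respectively. Then there exists a family a : Fin 4 × Fin 4 → V such that for all i, j, k the element a(i,j) + a(j,k) − a(i,k) lies in L_i + L_j + L_k, and yet there is no family x : Fin 4 → V satisfying x(j) − x(i) − a(i,j) ∈ L_i + L_j for all i, j. In particular, for a general abelian group A with a family of subgroups (A_i), the necessary cocycle condition Σ_j (−1)^j a(i₀,…,î_j,…,i_{n+1}) ∈ A_{i₀} + ⋯ + A_{i_{n+1}} is not sufficient for solvability of the congruences Σ_j (−1)^j x(i₀,…,î_j,…,iₙ) ≡ a(i₀,…,iₙ) (mod A_{i₀} + ⋯ + A_{iₙ}). -/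
/-- The four lines in `ℚ³` spanned by `(1,0,0)`, `(0,1,0)`, `(0,0,1)`, `(1,1,1)`. -/
noncomputable def fourLines : Fin 4 → Submodule ℚ (Fin 3 → ℚ) := fun i =>
  Submodule.span ℚ {![![(1:ℚ),0,0], ![0,1,0], ![0,0,1], ![1,1,1]] i}

lemma mem_sup3 {A B C : Submodule ℚ (Fin 3 → ℚ)} {x y z v : Fin 3 → ℚ}
    (hx : x ∈ A) (hy : y ∈ B) (hz : z ∈ C) (h : v = x + y + z) : v ∈ A ⊔ B ⊔ C := by
  subst h
  exact add_mem (add_mem (Submodule.mem_sup_left (Submodule.mem_sup_left hx))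
    (Submodule.mem_sup_left (Submodule.mem_sup_right hy))) (Submodule.mem_sup_right hz)

lemma smul_mem_span (c : ℚ) (v : Fin 3 → ℚ) : c • v ∈ Submodule.span ℚ {v} :=
  Submodule.smul_mem _ c (Submodule.subset_span rfl)

lemma t012 : fourLines 0 ⊔ fourLines 1 ⊔ fourLines 2 = ⊤ := by
  rw [eq_top_iff]; rintro v -
  refine mem_sup3 (smul_mem_span (v 0) _) (smul_mem_span (v 1) _) (smul_mem_span (v 2) _) ?_
  funext m; fin_cases m <;> simp [fourLines]

lemma t013 : fourLines 0 ⊔ fourLines 1 ⊔ fourLines 3 = ⊤ := by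
  rw [eq_top_iff]; rintro v -
  refine mem_sup3 (smul_mem_span (v 0 - v 2) _) (smul_mem_span (v 1 - v 2) _)
    (smul_mem_span (v 2) _) ?_
  funext m; fin_cases m <;> simp [fourLines]

lemma t023 : fourLines 0 ⊔ fourLines 2 ⊔ fourLines 3 = ⊤ := by
  rw [eq_top_iff]; rintro v -
  refine mem_sup3 (smul_mem_span (v 0 - v 1) _) (smul_mem_span (v 2 - v 1) _)
    (smul_mem_span (v 1) _) ?_
  funext m; fin_cases m <;> simp [fourLines]

lemma t123 : fourLines 1 ⊔ fourLines 2 ⊔ fourLines 3 = ⊤ := by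
  rw [eq_top_iff]; rintro v -
  refine mem_sup3 (smul_mem_span (v 1 - v 0) _) (smul_mem_span (v 2 - v 0) _)
    (smul_mem_span (v 0) _) ?_
  funext m; fin_cases m <;> simp [fourLines]

lemma sup3_top (i j k : Fin 4) (hij : i ≠ j) (hik : i ≠ k) (hjk : j ≠ k) :
    fourLines i ⊔ fourLines j ⊔ fourLines k = ⊤ := by
  fin_cases i <;> fin_cases j <;> fin_cases k <;>
    first
      | exact absurd rfl hij
      | exact absurd rfl hik
      | exact absurd rfl hjk
      | (rw [← t012]; ac_rfl)
      | (rw [← t013]; ac_rfl)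
      | (rw [← t023]; ac_rfl)
      | (rw [← t123]; ac_rfl)

def aa : Fin 4 → Fin 4 → Fin 3 → ℚ :=
  ![![![0,0,0], ![0,0,1], ![0,0,0], ![0,0,0]], ![![0,0,-1], ![0,0,0], ![0,0,0], ![0,0,0]],
    ![![0,0,0], ![0,0,0], ![0,0,0], ![0,0,0]], ![![0,0,0], ![0,0,0], ![0,0,0], ![0,0,0]]]

lemma aa_diag : ∀ i : Fin 4, aa i i = 0 := by
  intro i; fin_cases i <;> (funext m; fin_cases m <;> norm_num [aa])

lemma aa_antisym : ∀ i j : Fin 4, aa i j + aa j i = 0 := by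
  intro i j; fin_cases i <;> fin_cases j <;> (funext m; fin_cases m <;> norm_num [aa])

lemma span_single {v p : Fin 3 → ℚ} (h : p ∈ Submodule.span ℚ {v}) : ∃ c : ℚ, p = c • v := by
  obtain ⟨c, rfl⟩ := Submodule.mem_span_singleton.mp h; exact ⟨c, rfl⟩

/-- **The cocycle condition is not sufficient in general.**
With `V = ℚ³` and the four lines `L₀, L₁, L₂, L₃` in general position above, there
is a family `a : Fin 4 × Fin 4 → V` with `a i j + a j k - a i k ∈ L i + L j + L k`
for all `i, j, k`, yet no family `x : Fin 4 → V` satisfies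
`x j - x i - a i j ∈ L i + L j` for all `i, j`. -/
theorem cocycle_condition_not_sufficient :
    ∃ a : Fin 4 → Fin 4 → (Fin 3 → ℚ),
      (∀ i j k : Fin 4,
        a i j + a j k - a i k ∈ fourLines i ⊔ fourLines j ⊔ fourLines k) ∧
      ¬ ∃ x : Fin 4 → (Fin 3 → ℚ), ∀ i j : Fin 4,
        x j - x i - a i j ∈ fourLines i ⊔ fourLines j := by
  refine ⟨aa, ?_, ?_⟩
  · intro i j k
    rcases eq_or_ne i j with rfl | hij
    · rw [show aa i i + aa i k - aa i k = 0 by rw [aa_diag i]; abel]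
      exact zero_mem _
    rcases eq_or_ne j k with rfl | hjk
    · rw [show aa i j + aa j j - aa i j = 0 by rw [aa_diag j]; abel]
      exact zero_mem _
    rcases eq_or_ne i k with rfl | hik
    · rw [show aa i j + aa j i - aa i i = 0 by rw [aa_diag i, sub_zero]; exact aa_antisym i j]
      exact zero_mem _
    rw [sup3_top i j k hij hik hjk]
    exact Submodule.mem_top
  · rintro ⟨x, hx⟩
    have key : ∀ i j : Fin 4, ∃ s t : ℚ,
        x j - x i - aa i j = s • ![![(1:ℚ),0,0], ![0,1,0], ![0,0,1], ![1,1,1]] i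
          + t • ![![(1:ℚ),0,0], ![0,1,0], ![0,0,1], ![1,1,1]] j := by
      intro i j
      obtain ⟨p, hp, q, hq, hpq⟩ := Submodule.mem_sup.mp (hx i j)
      obtain ⟨s, rfl⟩ := span_single hp
      obtain ⟨t, rfl⟩ := span_single hq
      exact ⟨s, t, hpq.symm⟩
    obtain ⟨s1, t1, h01⟩ := key 0 1
    obtain ⟨s2, t2, h02⟩ := key 0 2
    obtain ⟨s3, t3, h03⟩ := key 0 3
    obtain ⟨s4, t4, h12⟩ := key 1 2
    obtain ⟨s5, t5, h13⟩ := key 1 3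
    obtain ⟨s6, t6, h23⟩ := key 2 3
    rw [show aa 0 1 = ![(0:ℚ),0,1] from rfl] at h01
    rw [show aa 0 2 = ![(0:ℚ),0,0] from rfl] at h02
    rw [show aa 0 3 = ![(0:ℚ),0,0] from rfl] at h03
    rw [show aa 1 2 = ![(0:ℚ),0,0] from rfl] at h12
    rw [show aa 1 3 = ![(0:ℚ),0,0] from rfl] at h13
    rw [show aa 2 3 = ![(0:ℚ),0,0] from rfl] at h23
    have e1 := congrFun h01 2
    have e2 := congrFun h02 1
    have e3a := congrFun h03 1
    have e3b := congrFun h03 2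
    have e4 := congrFun h12 0
    have e5a := congrFun h13 0
    have e5b := congrFun h13 2
    have e6a := congrFun h23 0
    have e6b := congrFun h23 1
    simp at e1 e2 e3a e3b e4 e5a e5b e6a e6b
    linarith
end

section
/- Let V = ℚ³ and let L₀, L₁, L₂, L₃ be the 1-dimensional ℚ-subspaces spanned by (1,0,0), (0,1,0), (0,0,1) and (1,1,1) respectively. Then the ℚ-linear map d from the product ∏_{i ∈ Fin 4} V/L_i to the product ∏_{i < j} V/(L_i + L_j), sending a family (x_i mod L_i)_{i} to the family (x_j − x_i mod (L_i + L_j))_{i<j}, is not surjective. -/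
/-- The coboundary map `d : ∏ i, V/Lᵢ → ∏_{i<j} V/(Lᵢ + Lⱼ)` sending
`(xᵢ mod Lᵢ)ᵢ` to `(xⱼ - xᵢ mod (Lᵢ + Lⱼ))_{i<j}`. -/
noncomputable def coboundaryMap :
    ((i : Fin 4) → (Fin 3 → ℚ) ⧸ fourLines i) →ₗ[ℚ]
      ((q : {q : Fin 4 × Fin 4 // q.1 < q.2}) →
        (Fin 3 → ℚ) ⧸ (fourLines q.1.1 ⊔ fourLines q.1.2)) :=
  LinearMap.pi fun q =>
    (Submodule.mapQ (fourLines q.1.2) (fourLines q.1.1 ⊔ fourLines q.1.2)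
        LinearMap.id (by simp)).comp
      (LinearMap.proj q.1.2)
    - (Submodule.mapQ (fourLines q.1.1) (fourLines q.1.1 ⊔ fourLines q.1.2)
        LinearMap.id (by simp)).comp
      (LinearMap.proj q.1.1)

lemma mem_pair_span_aux {M : Type*} [AddCommGroup M] [Module ℚ M] {u w x : M}
    (h : x ∈ Submodule.span ℚ {u} ⊔ Submodule.span ℚ {w}) :
    ∃ a b : ℚ, x = a • u + b • w := by
  rw [Submodule.mem_sup] at h
  obtain ⟨y, hy, z, hz, rfl⟩ := h
  rw [Submodule.mem_span_singleton] at hy hz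
  obtain ⟨a, rfl⟩ := hy
  obtain ⟨b, rfl⟩ := hz
  exact ⟨a, b, rfl⟩

/-- **The coboundary map is not surjective** for the four lines in general
position in `ℚ³`. -/
theorem coboundaryMap_not_surjective : ¬ Function.Surjective coboundaryMap := by
  intro h
  obtain ⟨x, hx⟩ := h (fun q => Submodule.Quotient.mk
    (if q.1 = ((0 : Fin 4), (1 : Fin 4)) then ![0, 0, 1] else 0))
  choose v hv using fun i => Submodule.Quotient.mk_surjective (fourLines i) (x i)
  have key : ∀ (q : {q : Fin 4 × Fin 4 // q.1 < q.2}),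
      v q.1.2 - v q.1.1 - (if q.1 = ((0 : Fin 4), (1 : Fin 4)) then ![0, 0, 1] else 0)
        ∈ fourLines q.1.1 ⊔ fourLines q.1.2 := by
    intro q
    have h2 := congrFun hx q
    simp only [coboundaryMap, LinearMap.pi_apply, LinearMap.sub_apply,
      LinearMap.coe_comp, Function.comp_apply, LinearMap.proj_apply, ← hv,
      Submodule.mapQ_apply, LinearMap.id_apply] at h2
    rw [← Submodule.Quotient.mk_sub, Submodule.Quotient.eq] at h2
    exact h2
  obtain ⟨a01, b01, h01⟩ := mem_pair_span_aux (key ⟨(0, 1), by decide⟩)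
  obtain ⟨a02, b02, h02⟩ := mem_pair_span_aux (key ⟨(0, 2), by decide⟩)
  obtain ⟨a03, b03, h03⟩ := mem_pair_span_aux (key ⟨(0, 3), by decide⟩)
  obtain ⟨a12, b12, h12⟩ := mem_pair_span_aux (key ⟨(1, 2), by decide⟩)
  obtain ⟨a13, b13, h13⟩ := mem_pair_span_aux (key ⟨(1, 3), by decide⟩)
  obtain ⟨a23, b23, h23⟩ := mem_pair_span_aux (key ⟨(2, 3), by decide⟩)
  have e01 := fun k => congrFun h01 k
  have e02 := fun k => congrFun h02 k
  have e03 := fun k => congrFun h03 k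
  have e12 := fun k => congrFun h12 k
  have e13 := fun k => congrFun h13 k
  have e23 := fun k => congrFun h23 k
  simp only [Pi.sub_apply, Pi.add_apply, Pi.smul_apply, smul_eq_mul] at e01 e02 e03 e12 e13 e23
  have a1 := e01 0; have a2 := e01 1; have a3 := e01 2
  have b1 := e02 0; have b2 := e02 1; have b3 := e02 2
  have c1 := e03 0; have c2 := e03 1; have c3 := e03 2
  have d1 := e12 0; have d2 := e12 1; have d3 := e12 2
  have f1 := e13 0; have f2 := e13 1; have f3 := e13 2
  have g1 := e23 0; have g2 := e23 1; have g3 := e23 2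
  have h3 : (![![(1:ℚ),0,0], ![0,1,0], ![0,0,1], ![1,1,1]] : Fin 4 → Fin 3 → ℚ) 3 = ![1,1,1] := rfl
  simp only [h3] at c1 c2 c3 f1 f2 f3 g1 g2 g3
  norm_num [Matrix.cons_val_zero, Matrix.cons_val_one, Matrix.head_cons,
    Matrix.cons_val_two, Matrix.tail_cons, Matrix.vecHead, Matrix.vecTail,
    Prod.ext_iff, Fin.ext_iff, show ((2:Fin 4) ≠ 1) by decide,
    show ((3:Fin 4) ≠ 1) by decide, show ((1:Fin 4) ≠ 0) by decide,
    show ((2:Fin 4) ≠ 0) by decide, Fin.isValue] at a1 a2 a3 b1 b2 b3 c1 c2 c3 d1 d2 d3 f1 f2 f3 g1 g2 g3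
  linarith
end

section
/- Let A be an abelian group, I a finite set, and (A_i)_{i∈I} a family of subgroups of A. Assume that the sublattice of subgroups of A generated by the A_i under join (sum of subgroups) and meet (intersection) is distributive, i.e. B ⊓ (C ⊔ D) = (B ⊓ C) ⊔ (B ⊓ D) for all B, C, D in the lattice closure of {A_i : i ∈ I}. Let n be a positive integer and a a family of elements of A indexed by (n+1)-tuples (i₀,…,iₙ) ∈ I^{n+1}. If Σ_{j=0}^{n+1} (−1)^j a(i₀,…,î_j,…,i_{n+1}) ∈ A_{i₀} + ⋯ + A_{i_{n+1}} for all i₀,…,i_{n+1} ∈ I, then there exists a family x of elements of A indexed by n-tuples such that Σ_{j=0}^{n} (−1)^j x(i₀,…,î_j,…,iₙ) − a(i₀,…,iₙ) ∈ A_{i₀} + ⋯ + A_{iₙ} for all i₀,…,iₙ ∈ I. -/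
/-- The lattice closure of a family of subgroups: the smallest family containing
the `A i` and closed under binary join (sum) and meet (intersection). -/
inductive IsInLatticeClosure {A : Type*} [AddCommGroup A] {I : Type*}
    (Ai : I → AddSubgroup A) : AddSubgroup A → Prop
  | base (i : I) : IsInLatticeClosure Ai (Ai i)
  | sup {B C : AddSubgroup A} : IsInLatticeClosure Ai B → IsInLatticeClosure Ai C →
      IsInLatticeClosure Ai (B ⊔ C)
  | inf {B C : AddSubgroup A} : IsInLatticeClosure Ai B → IsInLatticeClosure Ai C →
      IsInLatticeClosure Ai (B ⊓ C)

universe u v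

section Aux

variable {A : Type*} [AddCommGroup A] {I : Type*}

lemma mySuccAboveComp {p : ℕ} (j : Fin (p+2)) (k : Fin (p+1)) (h : (k:ℕ) < (j:ℕ)) (m : Fin p) :
    j.succAbove (k.succAbove m) =
      (⟨(k:ℕ), by omega⟩ : Fin (p+2)).succAbove ((⟨(j:ℕ)-1, by omega⟩ : Fin (p+1)).succAbove m) := by
  simp only [Fin.succAbove]
  split_ifs <;> (apply Fin.ext; simp_all [Fin.lt_def, Fin.castSucc, Fin.castAdd, Fin.castLE, Fin.succ]) <;> omega

/-- Čech coboundary. -/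
def cdiff {p : ℕ} (f : (Fin p → I) → A) : (Fin (p+1) → I) → A :=
  fun i => ∑ j : Fin (p+1), (-1:ℤ)^(j:ℕ) • f (fun k => i (j.succAbove k))

lemma cdiff_add {p : ℕ} (f g : (Fin p → I) → A) (i : Fin (p+1) → I) :
    cdiff (fun i' => f i' + g i') i = cdiff f i + cdiff g i := by
  simp [cdiff, smul_add, Finset.sum_add_distrib]

lemma cdiff_sub {p : ℕ} (f g : (Fin p → I) → A) (i : Fin (p+1) → I) :
    cdiff (fun i' => f i' - g i') i = cdiff f i - cdiff g i := by
  simp [cdiff, smul_sub, Finset.sum_sub_distrib]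

lemma cdiff_cons {p : ℕ} (t : I) (f : (Fin (p+1) → I) → A) (i : Fin (p+1) → I) :
    cdiff (fun i' : Fin p → I => f (Fin.cons t i')) i = f i - cdiff f (Fin.cons t i) := by
  have h1 : ∀ (j : Fin (p+1)), (fun k => (Fin.cons t i : Fin (p+2) → I) ((Fin.succ j).succAbove k))
      = (Fin.cons t (fun k => i (j.succAbove k)) : Fin (p+1) → I) := by
    intro j; funext k
    induction k using Fin.cases with
    | zero => rw [Fin.succ_succAbove_zero, Fin.cons_zero, Fin.cons_zero]
    | succ m => rw [Fin.succ_succAbove_succ, Fin.cons_succ, Fin.cons_succ]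
  have h0 : (fun k => (Fin.cons t i : Fin (p+2) → I) ((0 : Fin (p+2)).succAbove k)) = i := by
    funext k; rw [Fin.zero_succAbove, Fin.cons_succ]
  rw [cdiff, cdiff]
  conv_rhs => rw [Fin.sum_univ_succ]
  rw [h0]
  simp only [h1, Fin.val_succ, Fin.val_zero, pow_zero, one_smul, pow_succ, mul_neg_one, neg_smul,
    Finset.sum_neg_distrib]
  abel

lemma cdiff_cdiff {p : ℕ} (f : (Fin p → I) → A) (i : Fin (p+2) → I) :
    cdiff (cdiff f) i = 0 := by
  simp only [cdiff, Finset.smul_sum, smul_smul, ← pow_add]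
  rw [← Finset.sum_product']
  apply Finset.sum_ninvolution
    (g := fun jk : Fin (p+2) × Fin (p+1) =>
      if h : (jk.2 : ℕ) < (jk.1 : ℕ) then (⟨(jk.2:ℕ), by omega⟩, ⟨(jk.1:ℕ)-1, by omega⟩)
      else (⟨(jk.2:ℕ)+1, by omega⟩, ⟨(jk.1:ℕ), by omega⟩))
  · intro ⟨j, k⟩
    by_cases h : (k:ℕ) < (j:ℕ)
    · simp only [dif_pos h]
      have he : (fun k' => i (j.succAbove (k.succAbove k'))) =
          (fun k' => i ((⟨(k:ℕ), by omega⟩ : Fin (p+2)).succAbove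
            ((⟨(j:ℕ)-1, by omega⟩ : Fin (p+1)).succAbove k'))) := by
        funext m; rw [mySuccAboveComp j k h m]
      rw [he, ← add_smul]
      convert zero_smul ℤ _
      have : (j:ℕ) + (k:ℕ) = ((k:ℕ) + ((j:ℕ)-1)) + 1 := by omega
      rw [this, pow_succ]; ring
    · simp only [dif_neg h]
      have h' : ((⟨(j:ℕ), by omega⟩ : Fin (p+1)) : ℕ) < ((⟨(k:ℕ)+1, by omega⟩ : Fin (p+2)) : ℕ) := by
        simp; omega
      have he : (fun k' => i ((⟨(k:ℕ)+1, by omega⟩ : Fin (p+2)).succAbove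
            ((⟨(j:ℕ), by omega⟩ : Fin (p+1)).succAbove k'))) =
          (fun k' => i (j.succAbove (k.succAbove k'))) := by
        funext m
        rw [mySuccAboveComp (⟨(k:ℕ)+1, by omega⟩ : Fin (p+2)) (⟨(j:ℕ), by omega⟩ : Fin (p+1)) h' m]
        congr 1 <;> apply Fin.ext <;> simp
      rw [he, ← add_smul]
      convert zero_smul ℤ _
      have : ((k:ℕ)+1) + (j:ℕ) = ((j:ℕ) + (k:ℕ)) + 1 := by omega
      rw [this, pow_succ]; ring
  · intro ⟨j, k⟩ _
    by_cases h : (k:ℕ) < (j:ℕ)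
    · simp only [dif_pos h]
      intro he
      have := congrArg (fun q => (q.1 : ℕ)) he; simp at this; omega
    · simp only [dif_neg h]
      intro he
      have := congrArg (fun q => (q.1 : ℕ)) he; simp at this; omega
  · intro a; exact Finset.mem_univ _
  · intro ⟨j, k⟩
    by_cases h : (k:ℕ) < (j:ℕ)
    · rw [dif_pos h]
      have : ¬ (((⟨(j:ℕ)-1, by omega⟩ : Fin (p+1)) : ℕ) < ((⟨(k:ℕ), by omega⟩ : Fin (p+2)) : ℕ)) := by
        simp; omega
      rw [dif_neg this]
      ext <;> simp <;> omega
    · rw [dif_neg h]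
      have : ((⟨(j:ℕ), by omega⟩ : Fin (p+1)) : ℕ) < ((⟨(k:ℕ)+1, by omega⟩ : Fin (p+2)) : ℕ) := by
        simp; omega
      rw [dif_pos this]
      ext <;> simp

lemma myiSupSucc {m : ℕ} (g : Fin (m+1) → AddSubgroup A) :
    ⨆ k, g k = g 0 ⊔ ⨆ k : Fin m, g k.succ := by
  apply le_antisymm
  · exact iSup_le (Fin.cases le_sup_left
      (fun k => le_sup_of_le_right (le_iSup (fun k : Fin m => g k.succ) k)))
  · exact sup_le (le_iSup g 0) (iSup_le fun k => le_iSup g k.succ)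

lemma myClosureTrans {J : Type*} {B : I → AddSubgroup A} {B' : J → AddSubgroup A}
    (hB' : ∀ j, IsInLatticeClosure B (B' j)) {X : AddSubgroup A}
    (hX : IsInLatticeClosure B' X) : IsInLatticeClosure B X := by
  induction hX with
  | base j => exact hB' j
  | sup h1 h2 ih1 ih2 => exact .sup ih1 ih2
  | inf h1 h2 ih1 ih2 => exact .inf ih1 ih2

lemma myInfiSup {B : I → AddSubgroup A}
    (hdistrib : ∀ X Y Z : AddSubgroup A, IsInLatticeClosure B X → IsInLatticeClosure B Y →
      IsInLatticeClosure B Z → X ⊓ (Y ⊔ Z) = (X ⊓ Y) ⊔ (X ⊓ Z))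
    {G : AddSubgroup A} (hG : IsInLatticeClosure B G) :
    ∀ (m : ℕ) (C : Fin (m+1) → AddSubgroup A), (∀ k, IsInLatticeClosure B (C k)) →
      IsInLatticeClosure B (⨆ k, C k) ∧ G ⊓ (⨆ k, C k) = ⨆ k, (G ⊓ C k) := by
  intro m
  induction m with
  | zero =>
    intro C hC
    have h1 : ⨆ k, C k = C 0 :=
      le_antisymm (iSup_le fun k => by rw [Fin.fin_one_eq_zero k]) (le_iSup C 0)
    have h2 : ⨆ k, G ⊓ C k = G ⊓ C 0 :=
      le_antisymm (iSup_le fun k => by rw [Fin.fin_one_eq_zero k])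
        (le_iSup (fun k => G ⊓ C k) 0)
    rw [h1, h2]
    exact ⟨hC 0, rfl⟩
  | succ m IH =>
    intro C hC
    obtain ⟨hcl, heq⟩ := IH (fun k => C k.succ) (fun k => hC k.succ)
    rw [myiSupSucc C, myiSupSucc (fun k => G ⊓ C k)]
    refine ⟨.sup (hC 0) hcl, ?_⟩
    rw [hdistrib G (C 0) _ hG (hC 0) hcl, heq]

end Aux

lemma myAux (n : ℕ) : ∀ (r : ℕ) {A : Type u} [AddCommGroup A] {I : Type v} [Finite I],
    Nat.card I ≤ r → ∀ (B : I → AddSubgroup A) (G : AddSubgroup A),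
    (∀ X Y Z : AddSubgroup A, IsInLatticeClosure B X → IsInLatticeClosure B Y →
      IsInLatticeClosure B Z → X ⊓ (Y ⊔ Z) = (X ⊓ Y) ⊔ (X ⊓ Z)) →
    (∀ i, B i ≤ G) →
    ∀ a : (Fin (n+1) → I) → A, (∀ i, a i ∈ G) →
    (∀ i : Fin (n+2) → I, cdiff a i ∈ ⨆ k, B (i k)) →
    ∃ x : (Fin n → I) → A, (∀ i, x i ∈ G) ∧
      ∀ i : Fin (n+1) → I, cdiff x i - a i ∈ ⨆ k, B (i k) := by
  intro r
  induction r with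
  | zero =>
    intro A _ I _ hcard B G _ _ a _ _
    have : IsEmpty I := by
      rcases Nat.card_eq_zero.mp (Nat.le_zero.mp hcard) with h | h
      · exact h
      · exact absurd h (not_infinite_iff_finite.mpr ‹_›)
    exact ⟨fun _ => 0, fun _ => zero_mem G, fun i => (this.false (i 0)).elim⟩
  | succ r IH =>
    intro A _ I _ hcard B G hdistrib hle a haG hca
    classical
    by_cases hne : Nonempty I
    swap
    · have : IsEmpty I := not_nonempty_iff.mp hne
      exact ⟨fun _ => 0, fun _ => zero_mem G, fun i => (this.false (i 0)).elim⟩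
    obtain ⟨t⟩ := hne
    -- the smaller index set
    set J := {j : I // j ≠ t} with hJ
    have hcardJ : Nat.card J ≤ r := by
      have h1 : Nat.card J < Nat.card I := by
        letI := Fintype.ofFinite I
        rw [Nat.card_eq_fintype_card, Nat.card_eq_fintype_card]
        exact Fintype.card_subtype_lt (x := t) (by simp)
      omega
    set B' : J → AddSubgroup A := fun j => B t ⊓ B j.val with hB'def
    have hB' : ∀ j, IsInLatticeClosure B (B' j) := fun j => .inf (.base t) (.base j.val)
    have hdist' : ∀ X Y Z : AddSubgroup A, IsInLatticeClosure B' X → IsInLatticeClosure B' Y →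
        IsInLatticeClosure B' Z → X ⊓ (Y ⊔ Z) = (X ⊓ Y) ⊔ (X ⊓ Z) :=
      fun X Y Z hX hY hZ => hdistrib X Y Z (myClosureTrans hB' hX) (myClosureTrans hB' hY)
        (myClosureTrans hB' hZ)
    -- the "restricted" cocycle
    set c : (Fin (n+1) → I) → A := fun i => cdiff a (Fin.cons t i) with hcdef
    have hc : ∀ i : Fin (n+1) → I, c i ∈ B t ⊔ ⨆ k, B (i k) := by
      intro i
      have h1 := hca (Fin.cons t i)
      have h2 : (⨆ k, B ((Fin.cons t i : Fin (n+2) → I) k)) = B t ⊔ ⨆ k, B (i k) := by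
        rw [myiSupSucc (fun k => B ((Fin.cons t i : Fin (n+2) → I) k))]
        simp [Fin.cons_succ, Fin.cons_zero]
      rwa [h2] at h1
    -- split c into a part in B t and a part in the sup
    have hsplit : ∀ i : Fin (n+1) → I, ∃ uu ss : A, uu ∈ B t ∧ ss ∈ ⨆ k, B (i k) ∧
        c i = uu + ss ∧ ((∃ k, i k = t) → uu = 0) := by
      intro i
      by_cases hti : ∃ k, i k = t
      · obtain ⟨k₀, hk₀⟩ := hti
        have hBt : B t ≤ ⨆ k, B (i k) := by
          rw [← hk₀]; exact le_iSup (fun k => B (i k)) k₀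
        refine ⟨0, c i, zero_mem _, ?_, (zero_add _).symm, fun _ => rfl⟩
        have := hc i
        rwa [sup_eq_right.mpr hBt] at this
      · obtain ⟨y, hy, z, hz, hyz⟩ := (AddSubgroup.mem_sup).mp (hc i)
        exact ⟨y, z, hy, hz, hyz.symm, fun h => absurd h hti⟩
    choose u s hu hs hcs hu0 using hsplit
    -- the coboundary of u lies in B t ⊓ (sup)
    have hdu : ∀ i : Fin (n+2) → I, cdiff u i ∈ ⨆ k, (B t ⊓ B (i k)) := by
      intro i
      have m1 : cdiff u i ∈ B t :=
        sum_mem (fun j _ => zsmul_mem (hu _) _)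
      have m2 : cdiff u i ∈ ⨆ k, B (i k) := by
        have hueq : u = fun i' => c i' - s i' := by
          funext i'; rw [hcs i']; abel
        have e1 : cdiff u i = cdiff c i - cdiff s i := by rw [hueq, cdiff_sub]
        have e2 : cdiff c i = cdiff a i := by
          have := cdiff_cons t (cdiff a) i
          rw [cdiff_cdiff a (Fin.cons t i)] at this
          rw [hcdef]
          rw [this, sub_zero]
        have m3 : cdiff s i ∈ ⨆ k, B (i k) := by
          apply sum_mem
          intro j _
          apply zsmul_mem
          have := hs (fun k => i (j.succAbove k))
          exact (iSup_le fun k => le_iSup (fun k' => B (i k')) (j.succAbove k) :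
            (⨆ k, B (i (j.succAbove k))) ≤ ⨆ k, B (i k)) this
        rw [e1, e2]
        exact sub_mem (hca i) m3
      have := (myInfiSup hdistrib (.base t) (n+1) (fun k => B (i k)) (fun k => .base _)).2
      rw [← this]
      exact ⟨m1, m2⟩
    -- apply the induction hypothesis to u restricted to J
    obtain ⟨z, hzG, hz⟩ := IH hcardJ B' (B t) hdist' (fun j => inf_le_left)
      (fun i => u (fun k => (i k).val)) (fun i => hu _)
      (fun i => hdu (fun k => (i k).val))
    -- extend z by zero
    set zt : (Fin n → I) → A :=
      fun i' => if h : ∀ k, i' k ≠ t then z (fun k => ⟨i' k, h k⟩) else 0 with hztdef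
    refine ⟨fun i' => a (Fin.cons t i') + zt i', ?_, ?_⟩
    · intro i'
      apply add_mem (haG _)
      rw [hztdef]
      dsimp only
      split_ifs with h
      · exact hle t (hzG _)
      · exact zero_mem G
    · intro i
      have e0 : cdiff (fun i' => a (Fin.cons t i') + zt i') i
          = (a i - c i) + cdiff zt i := by
        rw [cdiff_add, cdiff_cons t a i, hcdef]
      rw [e0]
      have goal_eq : a i - c i + cdiff zt i - a i = cdiff zt i - c i := by abel
      rw [goal_eq]
      by_cases h1 : ∀ k, i k ≠ t
      · set iJ : Fin (n+1) → J := fun k => ⟨i k, h1 k⟩ with hiJ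
        have ez : cdiff zt i = cdiff z iJ := by
          apply Finset.sum_congr rfl
          intro j _
          congr 1
          have hcond : ∀ k, i (j.succAbove k) ≠ t := fun k => h1 _
          show zt (fun k => i (j.succAbove k)) = z (fun k => iJ (j.succAbove k))
          rw [hztdef]
          dsimp only
          rw [dif_pos hcond]
        have key := hz iJ
        have hre : cdiff z iJ - c i = (cdiff z iJ - u i) + (u i - c i) := by abel
        rw [ez, hre]
        apply add_mem
        · have : (⨆ k, B' (iJ k)) ≤ ⨆ k, B (i k) := by
            apply iSup_le
            intro k
            exact le_trans inf_le_right (le_iSup (fun k' => B (i k')) k)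
          exact this key
        · have : u i - c i = -(s i) := by rw [hcs i]; abel
          rw [this]
          exact neg_mem (hs i)
      · push_neg at h1
        obtain ⟨k₀, hk₀⟩ := h1
        have hu0i : u i = 0 := hu0 i ⟨k₀, hk₀⟩
        have hci : c i = s i := by rw [hcs i, hu0i, zero_add]
        have hBt : B t ≤ ⨆ k, B (i k) := by
          rw [← hk₀]; exact le_iSup (fun k => B (i k)) k₀
        have hzm : cdiff zt i ∈ ⨆ k, B (i k) := by
          apply sum_mem
          intro j _
          apply zsmul_mem
          rw [hztdef]
          dsimp only
          split_ifs with h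
          · exact hBt (hzG _)
          · exact zero_mem _
        rw [hci]
        exact sub_mem hzm (hs i)


/-- **Sufficiency of the cocycle condition in the distributive case.**
If `I` is finite and the subgroups `A i` generate a distributive lattice, then
every `n`-cocycle is a coboundary: the congruences
`∑ j, (-1)^j x(i₀,…,î_j,…,iₙ) ≡ a(i₀,…,iₙ) (mod A_{i₀} + ⋯ + A_{iₙ})` are solvable
provided `∑ j, (-1)^j a(i₀,…,î_j,…,i_{n+1}) ∈ A_{i₀} + ⋯ + A_{i_{n+1}}` always holds. -/
theorem cocycle_condition_sufficient_of_distributive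
    {A : Type*} [AddCommGroup A] {I : Type*} [Finite I]
    (Ai : I → AddSubgroup A)
    (hdistrib : ∀ B C D : AddSubgroup A, IsInLatticeClosure Ai B →
      IsInLatticeClosure Ai C → IsInLatticeClosure Ai D →
      B ⊓ (C ⊔ D) = (B ⊓ C) ⊔ (B ⊓ D))
    (n : ℕ) (hn : 0 < n) (a : (Fin (n + 1) → I) → A)
    (ha : ∀ i : Fin (n + 2) → I,
      (∑ j : Fin (n + 2), (-1 : ℤ) ^ (j : ℕ) • a (fun k => i (j.succAbove k)))
        ∈ ⨆ k, Ai (i k)) :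
    ∃ x : (Fin n → I) → A, ∀ i : Fin (n + 1) → I,
      (∑ j : Fin (n + 1), (-1 : ℤ) ^ (j : ℕ) • x (fun k => i (j.succAbove k))) - a i
        ∈ ⨆ k, Ai (i k) := by
  obtain ⟨x, _, hx⟩ := myAux n (Nat.card I) (le_refl _) Ai ⊤ hdistrib
    (fun _ => le_top) a (fun _ => AddSubgroup.mem_top _) (fun i => ha i)
  exact ⟨x, fun i => hx i⟩
end

section
/- Let p be a prime number, let R be the localization of ℤ at the prime ideal (p) (so R = ℤ_(p)), and let J : ℕ → Ideal R be a decreasing sequence of ideals (m ≤ k implies J k ≤ J m). Let n be a positive integer and let a assign to each strictly increasing (n+1)-tuple i₀ < ⋯ < iₙ of natural numbers an element a(i₀,…,iₙ) ∈ R. Suppose that for every strictly increasing (n+2)-tuple i₀ < ⋯ < i_{n+1} the alternating sum Σ_{j=0}^{n+1} (−1)^j a(i₀,…,î_j,…,i_{n+1}) lies in J(i₀). Then there exists a family x assigning to each strictly increasing n-tuple of natural numbers an element of R such that for every strictly increasing (n+1)-tuple i₀ < ⋯ < iₙ the difference Σ_{j=0}^{n} (−1)^j x(i₀,…,î_j,…,iₙ)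 − a(i₀,…,iₙ) lies in J(i₀). -/
namespace LocalCaseAux

open Finset

variable {R : Type*} [CommRing R]

theorem face_snoc {α : Type*} {n : ℕ} (g : Fin (n + 1) → α) (m : α) (j : Fin (n + 1)) :
    (fun k : Fin (n + 1) => (Fin.snoc g m : Fin (n + 2) → α) ((Fin.castSucc j).succAbove k)) =
      (Fin.snoc (fun k : Fin n => g (j.succAbove k)) m : Fin (n + 1) → α) := by
  funext k
  induction k using Fin.lastCases with
  | last =>
      rw [Fin.succAbove_of_le_castSucc _ _ (Fin.castSucc_le_castSucc_iff.mpr (Fin.le_last j)),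
        Fin.succ_last, Fin.snoc_last, Fin.snoc_last]
  | cast k =>
      rw [Fin.castSucc_succAbove_castSucc, Fin.snoc_castSucc, Fin.snoc_castSucc]

theorem face_last {α : Type*} {n : ℕ} (g : Fin (n + 1) → α) (m : α) :
    (fun k : Fin (n + 1) => (Fin.snoc g m : Fin (n + 2) → α) ((Fin.last (n + 1)).succAbove k))
      = g := by
  funext k
  rw [Fin.succAbove_last_apply, Fin.snoc_castSucc]

theorem strictMono_snoc {n : ℕ} {b : Fin (n + 1) → ℕ} {m : ℕ} (hb : StrictMono b)
    (h : b (Fin.last n) < m) : StrictMono (Fin.snoc b m : Fin (n + 2) → ℕ) := by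
  rw [Fin.strictMono_iff_lt_succ]
  intro i
  induction i using Fin.lastCases with
  | last => rw [Fin.succ_last, Fin.snoc_last, Fin.snoc_castSucc]; exact h
  | cast i =>
      rw [Fin.succ_castSucc, Fin.snoc_castSucc, Fin.snoc_castSucc]
      exact hb (Fin.castSucc_lt_succ : Fin.castSucc i < Fin.succ i)

theorem snoc_zero' {α : Type*} {n : ℕ} (g : Fin (n + 1) → α) (m : α) :
    (Fin.snoc g m : Fin (n + 2) → α) 0 = g 0 := by
  rw [show (0 : Fin (n + 2)) = Fin.castSucc 0 from rfl, Fin.snoc_castSucc]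

/-- the lower bound for the telescoping sum: one more than the last entry of `c`. -/
def loS {N : ℕ} (c : Fin N → ℕ) : ℕ :=
  if h : 0 < N then c ⟨N - 1, by omega⟩ + 1 else 0

theorem loS_le {N m : ℕ} {c : Fin N → ℕ} (h : ∀ t, c t < m) : loS c ≤ m := by
  unfold loS
  split_ifs with h'
  · exact h _
  · exact Nat.zero_le m

theorem loS_comp {N : ℕ} (b : Fin (N + 1) → ℕ) (j : Fin N) :
    loS (fun k => b ((Fin.castSucc j).succAbove k)) = b (Fin.last N) + 1 := by
  unfold loS
  rw [dif_pos j.pos]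
  have h1 : (Fin.castSucc j).succAbove ⟨N - 1, Nat.sub_lt j.pos one_pos⟩ = Fin.last N := by
    rw [Fin.succAbove_castSucc_of_le _ _ (Fin.le_def.mpr (Nat.le_pred_of_lt j.isLt))]
    ext
    simp [Fin.val_succ]
    have := j.pos
    omega
  show b ((Fin.castSucc j).succAbove ⟨N - 1, Nat.sub_lt j.pos one_pos⟩) + 1 = b (Fin.last N) + 1
  rw [h1]

theorem init_eq_comp {α : Type*} {N : ℕ} (b : Fin (N + 1) → α) :
    (fun k : Fin N => b ((Fin.last N).succAbove k)) = Fin.init b := by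
  funext k
  rw [Fin.succAbove_last_apply]
  rfl

/-- The cone construction. -/
noncomputable def coneX {N : ℕ} (a : (Fin (N + 2) → ℕ) → R) (j : Fin (N + 1) → ℕ) : R :=
  (-1 : ℤ) ^ N • ∑ k ∈ Finset.Ico (loS (Fin.init j)) (j (Fin.last N)),
    a (Fin.snoc (Fin.snoc (Fin.init j) k) (k + 1))

theorem coneX_eq {N : ℕ} (a : (Fin (N + 2) → ℕ) → R) (c : Fin (N + 1) → ℕ) :
    coneX a c = (-1 : ℤ) ^ N • ∑ k ∈ Finset.Ico (loS (Fin.init c)) (c (Fin.last N)),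
      a (Fin.snoc (Fin.snoc (Fin.init c) k) (k + 1)) := rfl

theorem coneX_snoc {N : ℕ} (a : (Fin (N + 2) → ℕ) → R) (c : Fin N → ℕ) (m : ℕ) :
    coneX a (Fin.snoc c m) =
      (-1 : ℤ) ^ N • ∑ k ∈ Finset.Ico (loS c) m, a (Fin.snoc (Fin.snoc c k) (k + 1)) := by
  unfold coneX
  rw [Fin.init_snoc, Fin.snoc_last]

/-- Decomposition of an alternating sum over all faces of a `snoc` tuple. -/
theorem sum_faces {M : Type*} [AddCommGroup M] {n : ℕ} (f : (Fin (n + 1) → ℕ) → M)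
    (g : Fin (n + 1) → ℕ) (m : ℕ) :
    (∑ j : Fin (n + 2), (-1 : ℤ) ^ (j : ℕ) •
        f (fun k => (Fin.snoc g m : Fin (n + 2) → ℕ) (j.succAbove k))) =
      (∑ j : Fin (n + 1), (-1 : ℤ) ^ (j : ℕ) • f (Fin.snoc (fun k => g (j.succAbove k)) m))
        + (-1 : ℤ) ^ (n + 1) • f g := by
  rw [Fin.sum_univ_castSucc]
  congr 1
  · apply Finset.sum_congr rfl
    intro j _
    rw [face_snoc]
    simp [Fin.coe_castSucc]
  · rw [face_last]
    simp [Fin.val_last]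

theorem coneX_spec {N : ℕ} (J : ℕ → Ideal R) (a : (Fin (N + 2) → ℕ) → R)
    (ha : ∀ i : Fin (N + 3) → ℕ, StrictMono i →
      (∑ j : Fin (N + 3), (-1 : ℤ) ^ (j : ℕ) • a (fun k => i (j.succAbove k))) ∈ J (i 0)) :
    ∀ i : Fin (N + 2) → ℕ, StrictMono i →
      (∑ j : Fin (N + 2), (-1 : ℤ) ^ (j : ℕ) • coneX a (fun k => i (j.succAbove k))) - a i
        ∈ J (i 0) := by
  have e1 : ∀ u : R, ((-1 : ℤ) ^ N) • (((-1 : ℤ) ^ N) • u) = u := fun u => by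
    rw [smul_smul, ← pow_add, Even.neg_one_pow ⟨N, rfl⟩, one_zsmul]
  have e2 : ∀ u : R, ((-1 : ℤ) ^ (N + 1)) • (((-1 : ℤ) ^ N) • u) = -u := fun u => by
    rw [smul_smul, ← pow_add, Odd.neg_one_pow ⟨N, by ring⟩, neg_one_zsmul]
  have e2' : ∀ u : R, ((-1 : ℤ) ^ N) • (((-1 : ℤ) ^ (N + 1)) • u) = -u := fun u => by
    rw [smul_smul, ← pow_add, Odd.neg_one_pow ⟨N, by ring⟩, neg_one_zsmul]
  have e3 : ∀ u : R, ((-1 : ℤ) ^ N) • (((-1 : ℤ) ^ (N + 2)) • u) = u := fun u => by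
    rw [smul_smul, ← pow_add, Even.neg_one_pow ⟨N + 1, by ring⟩, one_zsmul]
  have key : ∀ (b : Fin (N + 1) → ℕ), StrictMono b → ∀ m : ℕ, b (Fin.last N) + 1 ≤ m →
      (∑ j : Fin (N + 2), (-1 : ℤ) ^ (j : ℕ) •
          coneX a (fun k => (Fin.snoc b m : Fin (N + 2) → ℕ) (j.succAbove k)))
        - a (Fin.snoc b m) ∈ J (b 0) := by
    intro b hb m hm
    induction m, hm using Nat.le_induction with
    | base =>
        rw [sum_faces (coneX a) b (b (Fin.last N) + 1), Fin.sum_univ_castSucc]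
        simp only [Fin.coe_castSucc, Fin.val_last, init_eq_comp]
        have hzero : ∀ j : Fin N,
            coneX a (Fin.snoc (fun k => b ((Fin.castSucc j).succAbove k))
              (b (Fin.last N) + 1)) = 0 := by
          intro j
          rw [coneX_snoc, loS_comp, Finset.Ico_self, Finset.sum_empty, smul_zero]
        simp only [hzero, smul_zero, Finset.sum_const_zero, zero_add]
        rw [coneX_snoc a (Fin.init b), coneX_eq a b]
        have hle : loS (Fin.init b) ≤ b (Fin.last N) :=
          loS_le (fun t => hb (Fin.castSucc_lt_last t))
        rw [Finset.sum_Ico_succ_top hle, Fin.snoc_init_self]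
        rw [e1, e2]
        have h0 : ∀ u v : R, (u + v) + -u - v = 0 := fun u v => by ring
        rw [h0]
        exact zero_mem _
    | succ m hm ih =>
        have hm' : b (Fin.last N) < m := hm
        have hww : StrictMono
            (Fin.snoc (Fin.snoc b m : Fin (N + 2) → ℕ) (m + 1) : Fin (N + 3) → ℕ) := by
          apply strictMono_snoc (strictMono_snoc hb hm')
          rw [Fin.snoc_last]
          omega
        have hC := ha _ hww
        rw [sum_faces a (Fin.snoc b m) (m + 1),
          sum_faces (fun c => a (Fin.snoc c (m + 1))) b m, snoc_zero', snoc_zero'] at hC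
        have hC' := zsmul_mem hC ((-1 : ℤ) ^ N)
        rw [sum_faces (coneX a) b (m + 1)]
        rw [sum_faces (coneX a) b m] at ih
        have hterm : ∀ j : Fin (N + 1),
            coneX a (Fin.snoc (fun k => b (j.succAbove k)) (m + 1)) =
              coneX a (Fin.snoc (fun k => b (j.succAbove k)) m) +
                (-1 : ℤ) ^ N •
                  a (Fin.snoc (Fin.snoc (fun k => b (j.succAbove k)) m) (m + 1)) := by
          intro j
          have hlo : loS (fun k => b (j.succAbove k)) ≤ m :=
            loS_le (fun t => lt_of_le_of_lt (hb.monotone (Fin.le_last _)) hm')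
          rw [coneX_snoc, coneX_snoc, Finset.sum_Ico_succ_top hlo, smul_add]
        simp only [hterm, smul_add, Finset.sum_add_distrib]
        rw [smul_add, smul_add, Finset.smul_sum] at hC'
        simp only [e2', e3] at hC'
        have hfin : ∀ j : Fin (N + 1), ((-1 : ℤ) ^ N) • ((-1 : ℤ) ^ (j : ℕ) •
            a (Fin.snoc (Fin.snoc (fun k => b (j.succAbove k)) m) (m + 1))) =
            ((-1 : ℤ) ^ (j : ℕ)) • (((-1 : ℤ) ^ N) •
            a (Fin.snoc (Fin.snoc (fun k => b (j.succAbove k)) m) (m + 1))) := fun j => by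
          rw [smul_comm]
        simp only [hfin] at hC'
        have := add_mem ih hC'
        convert this using 1
        abel
  intro i hi
  have h0 : StrictMono (Fin.init i) := fun s t h => hi (Fin.castSucc_lt_castSucc_iff.mpr h)
  have h1 : (Fin.init i) (Fin.last N) + 1 ≤ i (Fin.last (N + 1)) := hi (Fin.castSucc_lt_last _)
  have h2 := key (Fin.init i) h0 (i (Fin.last (N + 1))) h1
  rw [Fin.snoc_init_self] at h2
  have h3 : (Fin.init i) 0 = i 0 := by
    show i (Fin.castSucc 0) = i 0
    rw [Fin.castSucc_zero]
  rwa [h3] at h2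

end LocalCaseAux

/-- The multiplicative set of integers not divisible by the prime `p`, i.e. the
complement of the prime ideal `(p)` of `ℤ`. -/
def primeComplZ (p : ℕ) (hp : p.Prime) : Submonoid ℤ where
  carrier := {x : ℤ | ¬ (p : ℤ) ∣ x}
  one_mem' := by
    intro h
    rw [show (1 : ℤ) = ((1 : ℕ) : ℤ) by norm_num, Int.natCast_dvd_natCast,
      Nat.dvd_one] at h
    exact hp.one_lt.ne' h
  mul_mem' := by
    intro a b ha hb h
    rcases (Nat.prime_iff_prime_int.mp hp).2.2 a b h with h' | h'
    · exact ha h'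
    · exact hb h'

/-- **The local case.** Let `p` be prime, `R = ℤ_(p)` the localization of `ℤ` at
the prime ideal `(p)`, and `J : ℕ → Ideal R` a decreasing sequence of ideals.
If for every strictly increasing `(n+2)`-tuple `i₀ < ⋯ < i_{n+1}` of naturals the
alternating sum `∑ j, (-1)^j a(i₀,…,î_j,…,i_{n+1})` lies in `J i₀`, then there is
a family `x` on strictly increasing `n`-tuples such that for every strictly
increasing `(n+1)`-tuple `i₀ < ⋯ < iₙ`, the difference
`∑ j, (-1)^j x(i₀,…,î_j,…,iₙ) - a(i₀,…,iₙ)` lies in `J i₀`. -/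
theorem local_case_cocycles_are_coboundaries (p : ℕ) (hp : p.Prime)
    (J : ℕ → Ideal (Localization (primeComplZ p hp)))
    (hJ : ∀ m k : ℕ, m ≤ k → J k ≤ J m)
    (n : ℕ) (hn : 0 < n)
    (a : (Fin (n + 1) → ℕ) → Localization (primeComplZ p hp))
    (ha : ∀ i : Fin (n + 2) → ℕ, StrictMono i →
      (∑ j : Fin (n + 2), (-1 : ℤ) ^ (j : ℕ) • a (fun k => i (j.succAbove k)))
        ∈ J (i 0)) :
    ∃ x : (Fin n → ℕ) → Localization (primeComplZ p hp),
      ∀ i : Fin (n + 1) → ℕ, StrictMono i →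
        (∑ j : Fin (n + 1), (-1 : ℤ) ^ (j : ℕ) • x (fun k => i (j.succAbove k))) - a i
          ∈ J (i 0) := by
  obtain ⟨N, rfl⟩ : ∃ N, n = N + 1 := ⟨n - 1, by omega⟩
  exact ⟨LocalCaseAux.coneX a, LocalCaseAux.coneX_spec J a ha⟩
end

section
/- Let A be an abelian group, (A_i)_{i∈I} and (B_j)_{j∈J} two families of subgroups of A, and let τ, σ : J → I be two refinement maps, i.e. A_{τ(j)} ⊆ B_j and A_{σ(j)} ⊆ B_j for all j ∈ J. Let n be a nonnegative integer and let f be an n-cocycle for the family (A_i): a family of elements of A indexed by (n+1)-tuples of I with Σ_{k=0}^{n+1} (−1)^k f(i₀,…,î_k,…,i_{n+1}) ∈ A_{i₀} + ⋯ + A_{i_{n+1}} for all tuples. Then the difference of the two pulled-back cocycles is a coboundary for the family (B_j): there exists a family g of elements of A indexed by n-tuples of J such that for all j₀,…,jₙ ∈ J, f(σ(j₀),…,σ(jₙ)) − f(τ(j₀),…,τ(jₙ)) − Σ_{k=0}^{n} (−1)^k g(j₀,…,ĵ_k,…,jₙ) ∈ B_{j₀} + ⋯ + B_{jₙ}. 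-/
namespace RefinementAux

variable {I J : Type*} (σ τ : J → I)

/-- Delete the `k`-th entry of a sequence. -/
def drop {α : Type*} (k : ℕ) (i : ℕ → α) : ℕ → α := fun l => if l < k then i l else i (l + 1)

/-- The mixed "prism" sequence: `σ` up to index `m`, then `τ` shifted by one. -/
def mix (j : ℕ → J) (m : ℕ) : ℕ → I := fun k => if k ≤ m then σ (j k) else τ (j (k - 1))

/-- The "diagonal" sequence: `σ` below `m`, then `τ`. -/
def Dg (j : ℕ → J) (m : ℕ) : ℕ → I := fun l => if l < m then σ (j l) else τ (j l)

lemma drop_mix_self (j : ℕ → J) (m : ℕ) : drop m (mix σ τ j m) = Dg σ τ j m := by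
  funext l; simp only [drop, mix, Dg]
  split_ifs <;> first | rfl | omega | (congr 2 <;> omega)

lemma drop_mix_succ (j : ℕ → J) (m : ℕ) : drop (m + 1) (mix σ τ j m) = Dg σ τ j (m + 1) := by
  funext l; simp only [drop, mix, Dg]
  split_ifs <;> first | rfl | omega | (congr 2 <;> omega)

lemma drop_mix_lt (j : ℕ → J) {k m : ℕ} (h : k < m) :
    drop k (mix σ τ j m) = mix σ τ (drop k j) (m - 1) := by
  funext l; simp only [drop, mix]
  split_ifs <;> first | rfl | omega | (congr 2 <;> omega)

lemma drop_mix_gt (j : ℕ → J) {k m : ℕ} (h : m + 1 < k) :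
    drop k (mix σ τ j m) = mix σ τ (drop (k - 1) j) m := by
  funext l; simp only [drop, mix]
  split_ifs <;> first | rfl | omega | (congr 2 <;> omega)

open Finset in
/-- The prism/homotopy identity. -/
lemma key {A : Type*} [AddCommGroup A] (n : ℕ) (F : (ℕ → I) → A) (j : ℕ → J) :
    ∑ m ∈ range (n + 1), (-1 : ℤ) ^ m •
        ∑ k ∈ range (n + 2), (-1 : ℤ) ^ k • F (drop k (mix σ τ j m))
      = F (Dg σ τ j 0) - F (Dg σ τ j (n + 1))
        - ∑ r ∈ range (n + 1), (-1 : ℤ) ^ r •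
            ∑ p ∈ range n, (-1 : ℤ) ^ p • F (mix σ τ (drop r j) p) := by
  have step1 : ∀ m ∈ range (n + 1),
      (-1 : ℤ) ^ m • ∑ k ∈ range (n + 2), (-1 : ℤ) ^ k • F (drop k (mix σ τ j m))
      = (∑ k ∈ range m, (-1 : ℤ) ^ (m + k) • F (mix σ τ (drop k j) (m - 1)))
        + (F (Dg σ τ j m) - F (Dg σ τ j (m + 1)))
        + ∑ x ∈ range (n - m), (-1 : ℤ) ^ x • F (mix σ τ (drop (m + 1 + x) j) m) := by
    intro m hm
    rw [mem_range] at hm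
    rw [Finset.smul_sum]
    have hsplit : n + 2 = m + (n - m + 1 + 1) := by omega
    rw [hsplit, Finset.sum_range_add]
    rw [Finset.sum_range_succ', Finset.sum_range_succ']
    have e1 : ∀ k ∈ range m,
        (-1 : ℤ) ^ m • ((-1 : ℤ) ^ k • F (drop k (mix σ τ j m)))
        = (-1 : ℤ) ^ (m + k) • F (mix σ τ (drop k j) (m - 1)) := by
      intro k hk
      rw [mem_range] at hk
      rw [drop_mix_lt σ τ j hk, smul_smul, ← pow_add]
    have e2 : ∀ x ∈ range (n - m),
        (-1 : ℤ) ^ m • ((-1 : ℤ) ^ (m + (x + 1 + 1)) • F (drop (m + (x + 1 + 1)) (mix σ τ j m)))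
        = (-1 : ℤ) ^ x • F (mix σ τ (drop (m + 1 + x) j) m) := by
      intro x hx
      have h : m + 1 < m + (x + 1 + 1) := by omega
      rw [drop_mix_gt σ τ j h, smul_smul, ← pow_add]
      have h2 : m + (x + 1 + 1) - 1 = m + 1 + x := by omega
      rw [h2]
      congr 1
      have h3 : m + (m + (x + 1 + 1)) = 2 * (m + 1) + x := by omega
      rw [h3, pow_add, pow_mul]
      norm_num
    have e3 : (-1 : ℤ) ^ m • ((-1 : ℤ) ^ (m + (0 + 1)) • F (drop (m + (0 + 1)) (mix σ τ j m)))
        = - F (Dg σ τ j (m + 1)) := by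
      have h : m + (0 + 1) = m + 1 := by omega
      rw [h, drop_mix_succ σ τ j m, smul_smul, ← pow_add]
      have h2 : m + (m + 1) = 2 * m + 1 := by ring
      rw [h2, pow_succ, pow_mul]
      norm_num
    have e4 : (-1 : ℤ) ^ m • ((-1 : ℤ) ^ (m + 0) • F (drop (m + 0) (mix σ τ j m)))
        = F (Dg σ τ j m) := by
      have h : m + 0 = m := by omega
      rw [h, drop_mix_self σ τ j m, smul_smul, ← pow_add]
      have h2 : m + m = 2 * m := by ring
      rw [h2, pow_mul]
      norm_num
    rw [Finset.sum_congr rfl e1, Finset.sum_congr rfl e2, e3, e4]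
    abel
  rw [Finset.sum_congr rfl step1]
  rw [Finset.sum_add_distrib, Finset.sum_add_distrib]
  rw [Finset.sum_range_sub' (fun m => F (Dg σ τ j m)) (n + 1)]
  have crossA : ∑ m ∈ range (n + 1),
      ∑ k ∈ range m, (-1 : ℤ) ^ (m + k) • F (mix σ τ (drop k j) (m - 1))
      = ∑ p ∈ range n, ∑ k ∈ range (p + 1),
          (-1 : ℤ) ^ (p + 1 + k) • F (mix σ τ (drop k j) p) := by
    rw [Finset.sum_range_succ']
    simp
  have crossB : ∑ m ∈ range (n + 1),
      ∑ x ∈ range (n - m), (-1 : ℤ) ^ x • F (mix σ τ (drop (m + 1 + x) j) m)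
      = ∑ p ∈ range n, ∑ x ∈ range (n - p),
          (-1 : ℤ) ^ x • F (mix σ τ (drop (p + 1 + x) j) p) := by
    rw [Finset.sum_range_succ]
    simp
  rw [crossA, crossB]
  have target : ∑ r ∈ range (n + 1), (-1 : ℤ) ^ r •
      ∑ p ∈ range n, (-1 : ℤ) ^ p • F (mix σ τ (drop r j) p)
      = - ((∑ p ∈ range n, ∑ k ∈ range (p + 1),
              (-1 : ℤ) ^ (p + 1 + k) • F (mix σ τ (drop k j) p))
          + ∑ p ∈ range n, ∑ x ∈ range (n - p),
              (-1 : ℤ) ^ x • F (mix σ τ (drop (p + 1 + x) j) p)) := by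
    simp only [Finset.smul_sum, smul_smul, ← pow_add]
    rw [Finset.sum_comm]
    rw [← Finset.sum_add_distrib, ← Finset.sum_neg_distrib]
    refine Finset.sum_congr rfl fun p hp => ?_
    rw [mem_range] at hp
    have hsplit : n + 1 = (p + 1) + (n - p) := by omega
    rw [hsplit, Finset.sum_range_add, neg_add]
    congr 1
    · rw [← Finset.sum_neg_distrib]
      refine Finset.sum_congr rfl fun k _ => ?_
      rw [← neg_smul]
      congr 1
      have h1 : p + 1 + k = (k + p) + 1 := by omega
      rw [h1, pow_succ]
      ring
    · rw [← Finset.sum_neg_distrib]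
      refine Finset.sum_congr rfl fun x _ => ?_
      rw [← neg_smul]
      congr 1
      have h1 : p + 1 + x + p = 2 * p + 1 + x := by omega
      rw [h1, pow_add, pow_succ, pow_mul]
      norm_num
  rw [target]
  abel

lemma mix_congr {A' : Type*} (j₁ j₂ : ℕ → J) {p t n : ℕ} (hn : 0 < n) (hp : p < n) (ht : t ≤ n)
    (h : ∀ u, u < n → j₁ u = j₂ u) : mix σ τ j₁ p t = mix σ τ j₂ p t := by
  simp only [mix]
  split_ifs with hle
  · rw [h t (by omega)]
  · rw [h (t - 1) (by omega)]

lemma succAbove_val {n : ℕ} (k : Fin (n + 2)) (l : Fin (n + 1)) :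
    ((k.succAbove l : Fin (n + 2)) : ℕ) = if (l : ℕ) < (k : ℕ) then (l : ℕ) else (l : ℕ) + 1 := by
  simp only [Fin.succAbove]
  split_ifs with h1 h2 h2 <;> simp_all [Fin.lt_def]

lemma succAbove_val' {n : ℕ} (k : Fin (n + 1)) (l : Fin n) :
    ((k.succAbove l : Fin (n + 1)) : ℕ) = if (l : ℕ) < (k : ℕ) then (l : ℕ) else (l : ℕ) + 1 := by
  simp only [Fin.succAbove]
  split_ifs with h1 h2 h2 <;> simp_all [Fin.lt_def]

end RefinementAux

open RefinementAux in
/-- **Two refinement maps induce the same map in cohomology.**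
Let `(A_i)_{i∈I}` and `(B_j)_{j∈J}` be families of subgroups of an abelian group
`A`, and `τ, σ : J → I` refinement maps (`A_{τ j} ⊆ B_j` and `A_{σ j} ⊆ B_j`).
If `f` is an `n`-cocycle for `(A_i)`, then the difference of the two pullbacks
`σ*f - τ*f` is a coboundary for `(B_j)`. -/
theorem refinement_maps_cohomologous
    {A : Type*} [AddCommGroup A] {I J : Type*}
    (Ai : I → AddSubgroup A) (Bj : J → AddSubgroup A)
    (τ σ : J → I) (hτ : ∀ j, Ai (τ j) ≤ Bj j) (hσ : ∀ j, Ai (σ j) ≤ Bj j)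
    (n : ℕ) (f : (Fin (n + 1) → I) → A)
    (hf : ∀ i : Fin (n + 2) → I,
      (∑ k : Fin (n + 2), (-1 : ℤ) ^ (k : ℕ) • f (fun l => i (k.succAbove l)))
        ∈ ⨆ k, Ai (i k)) :
    ∃ g : (Fin n → J) → A, ∀ j : Fin (n + 1) → J,
      f (fun l => σ (j l)) - f (fun l => τ (j l))
        - (∑ k : Fin (n + 1), (-1 : ℤ) ^ (k : ℕ) • g (fun l => j (k.succAbove l)))
        ∈ ⨆ k, Bj (j k) := by
  classical
  set F : (ℕ → I) → A := fun i => f (fun l => i (l : ℕ)) with hF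
  have hFcongr : ∀ i₁ i₂ : ℕ → I, (∀ t, t ≤ n → i₁ t = i₂ t) → F i₁ = F i₂ := by
    intro i₁ i₂ h
    rw [hF]
    simp only
    congr 1
    funext l
    exact h l (Nat.lt_succ_iff.mp l.isLt)
  set g : (Fin n → J) → A := fun j' =>
      if hn : 0 < n then
        - ∑ p ∈ Finset.range n, (-1 : ℤ) ^ p •
            F (mix σ τ (fun t => j' ⟨min t (n - 1), by omega⟩) p)
      else 0 with hg
  refine ⟨g, ?_⟩
  intro j
  set jn : ℕ → J := fun t => j ⟨min t n, by omega⟩ with hjn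
  have hjn_eq : ∀ (t : ℕ) (ht : t ≤ n), jn t = j ⟨t, by omega⟩ := by
    intro t ht
    rw [hjn]
    simp only
    congr 1
    exact Fin.ext (by simp [Nat.min_eq_left ht])
  have hkey := RefinementAux.key σ τ n F jn
  set S := ∑ m ∈ Finset.range (n + 1), (-1 : ℤ) ^ m •
      ∑ k ∈ Finset.range (n + 2), (-1 : ℤ) ^ k • F (drop k (mix σ τ jn m)) with hS
  set C := ∑ r ∈ Finset.range (n + 1), (-1 : ℤ) ^ r •
      ∑ p ∈ Finset.range n, (-1 : ℤ) ^ p • F (mix σ τ (drop r jn) p) with hC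
  -- membership of S
  have hmem : S ∈ ⨆ k, Bj (j k) := by
    rw [hS]
    refine AddSubgroup.sum_mem _ fun m hm => AddSubgroup.zsmul_mem _ ?_ _
    rw [Finset.mem_range] at hm
    have h1 := hf (fun k : Fin (n + 2) => mix σ τ jn m (k : ℕ))
    have h2 : (∑ k : Fin (n + 2), (-1 : ℤ) ^ (k : ℕ) •
        f (fun l => mix σ τ jn m ((k.succAbove l : Fin (n + 2)) : ℕ)))
        = ∑ k ∈ Finset.range (n + 2), (-1 : ℤ) ^ k • F (drop k (mix σ τ jn m)) := by
      rw [← Fin.sum_univ_eq_sum_range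
        (fun k => (-1 : ℤ) ^ k • F (drop k (mix σ τ jn m))) (n + 2)]
      refine Finset.sum_congr rfl fun k _ => ?_
      congr 1
      rw [hF]
      simp only
      congr 1
      funext l
      rw [succAbove_val]
      simp only [drop]
      split_ifs <;> rfl
    rw [h2] at h1
    refine SetLike.le_def.mp ?_ h1
    refine iSup_le fun k => ?_
    by_cases hk : (k : ℕ) ≤ m
    · have he : mix σ τ jn m (k : ℕ) = σ (jn (k : ℕ)) := by simp [mix, hk]
      rw [he, hjn_eq (k : ℕ) (by omega)]
      exact le_trans (hσ _) (le_iSup (fun l => Bj (j l)) _)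
    · have he : mix σ τ jn m (k : ℕ) = τ (jn ((k : ℕ) - 1)) := by simp [mix, hk]
      rw [he, hjn_eq ((k : ℕ) - 1) (by omega)]
      exact le_trans (hτ _) (le_iSup (fun l => Bj (j l)) _)
  -- identify the pulled-back faces of g
  have hgk : ∀ k : Fin (n + 1), g (fun l => j (k.succAbove l))
      = - ∑ p ∈ Finset.range n, (-1 : ℤ) ^ p • F (mix σ τ (drop (k : ℕ) jn) p) := by
    intro k
    rcases Nat.eq_zero_or_pos n with h0 | hn
    · subst h0
      simp [hg]
    · rw [hg]
      simp only
      rw [dif_pos hn]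
      congr 1
      refine Finset.sum_congr rfl fun p hp => ?_
      rw [Finset.mem_range] at hp
      congr 1
      apply hFcongr
      intro t ht
      have hag : ∀ u : ℕ, u < n → j (k.succAbove ⟨min u (n - 1), by omega⟩) = drop (k : ℕ) jn u := by
        intro u hu
        have hmin : min u (n - 1) = u := by omega
        simp only [drop]
        rcases lt_or_ge u (k : ℕ) with h | h
        · rw [if_pos h, hjn_eq u (by omega)]
          congr 1
          apply Fin.ext
          rw [succAbove_val']
          simp [hmin, h]
        · rw [if_neg (not_lt.mpr h), hjn_eq (u + 1) (by omega)]
          congr 1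
          apply Fin.ext
          rw [succAbove_val']
          simp [hmin, not_lt.mpr h]
      exact mix_congr (A' := A) σ τ _ _ hn hp ht hag
  -- convert the Fin-indexed sum in the goal
  have hsum : (∑ k : Fin (n + 1), (-1 : ℤ) ^ (k : ℕ) • g (fun l => j (k.succAbove l))) = - C := by
    rw [hC, ← Finset.sum_neg_distrib,
      ← Fin.sum_univ_eq_sum_range (fun r => -((-1 : ℤ) ^ r •
        ∑ p ∈ Finset.range n, (-1 : ℤ) ^ p • F (mix σ τ (drop r jn) p))) (n + 1)]
    refine Finset.sum_congr rfl fun k _ => ?_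
    rw [hgk k, smul_neg]
  have hσf : f (fun l => σ (j l)) = F (Dg σ τ jn (n + 1)) := by
    rw [hF]
    simp only
    congr 1
    funext l
    simp only [Dg]
    rw [if_pos (by omega : (l : ℕ) < n + 1), hjn_eq (l : ℕ) (by omega)]
  have hτf : f (fun l => τ (j l)) = F (Dg σ τ jn 0) := by
    rw [hF]
    simp only
    congr 1
    funext l
    simp only [Dg]
    rw [if_neg (by omega : ¬ (l : ℕ) < 0), hjn_eq (l : ℕ) (by omega)]
  rw [hsum, hσf, hτf, sub_neg_eq_add]
  have hfin : F (Dg σ τ jn (n + 1)) - F (Dg σ τ jn 0) + C = - S := by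
    rw [hkey]
    abel
  rw [hfin]
  exact neg_mem hmem
end

section
/- Let A be an abelian group, (A_i)_{i∈I} a family of subgroups, and n a positive integer. Let f be an n-cocycle: a family of elements of A indexed by (n+1)-tuples of I with Σ_{j=0}^{n+1} (−1)^j f(i₀,…,î_j,…,i_{n+1}) ∈ A_{i₀} + ⋯ + A_{i_{n+1}} for all tuples. Then f is cohomologous to an alternating cocycle: there exist a family g indexed by (n+1)-tuples and a family h indexed by n-tuples such that (1) g(i₀,…,iₙ) ∈ A_{i₀} + ⋯ + A_{iₙ} whenever the tuple (i₀,…,iₙ) has a repeated entry, (2) g(i_{π(0)},…,i_{π(n)}) ≡ sign(π) · g(i₀,…,iₙ) modulo A_{i₀} + ⋯ + A_{iₙ} for every permutation π of {0,…,n} and every tuple with pairwise distinct entries, (3) g is an n-cocycle, and (4) f(i₀,…,iₙ) − g(i₀,…,iₙ) − Σ_{j=0}^{n} (−1)^j h(i₀,…,î_j,…,iₙ) ∈ A_{i₀} + ⋯ + A_{iₙ} for all tuples. -/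
set_option linter.unusedSectionVars false

namespace CocycleAlt
open Finsupp

variable {I : Type*}

abbrev Ch (I : Type*) (m : ℕ) : Type _ := (Fin m → I) →₀ ℤ

def face {m : ℕ} (t : Fin (m+1) → I) (j : Fin (m+1)) : Fin m → I := fun k => t (j.succAbove k)

noncomputable def bd {m : ℕ} : Ch I (m+1) →ₗ[ℤ] Ch I m :=
  Finsupp.lift _ ℤ _ (fun t => ∑ j : Fin (m+1), (-1:ℤ)^(j:ℕ) • Finsupp.single (face t j) 1)

noncomputable def cone {m : ℕ} (a : I) : Ch I m →ₗ[ℤ] Ch I (m+1) :=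
  Finsupp.lift _ ℤ _ (fun t => Finsupp.single (Fin.cons a t) 1)

lemma bd_single {m : ℕ} (t : Fin (m+1) → I) :
    bd (Finsupp.single t 1) = ∑ j : Fin (m+1), (-1:ℤ)^(j:ℕ) • Finsupp.single (face t j) (1:ℤ) := by
  simp [bd]

lemma cone_single {m : ℕ} (a : I) (t : Fin m → I) :
    cone a (Finsupp.single t 1) = Finsupp.single (Fin.cons a t) (1:ℤ) := by
  simp [cone]

lemma val_succAbove {m : ℕ} (p : Fin (m+1)) (i : Fin m) :
    ((p.succAbove i : Fin (m+1)) : ℕ) = if (i:ℕ) < (p:ℕ) then (i:ℕ) else (i:ℕ)+1 := by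
  unfold Fin.succAbove
  split_ifs with h1 h2 h3
  · rfl
  · exact absurd (by exact_mod_cast h1) h2
  · exact absurd (by exact_mod_cast h3) h1
  · rfl

lemma succAbove_succAbove {m : ℕ} (j : Fin (m+2)) (l : Fin (m+1)) (h : (j:ℕ) ≤ (l:ℕ))
    (x : Fin m) :
    j.succAbove (l.succAbove x) =
      (l.succ).succAbove ((⟨(j:ℕ), h.trans_lt l.isLt⟩ : Fin (m+1)).succAbove x) := by
  apply Fin.ext
  simp only [val_succAbove, Fin.val_succ]
  split_ifs <;> omega

set_option maxHeartbeats 1000000 in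
/-- ∂∂ = 0 on generators. -/
lemma bd_bd_single {m : ℕ} (t : Fin (m+2) → I) :
    bd (bd (Finsupp.single t (1:ℤ))) = 0 := by
  classical
  rw [bd_single, map_sum]
  simp only [map_smul, bd_single, Finset.smul_sum]
  set F : Fin (m+2) × Fin (m+1) → Ch I m := fun p =>
    (-1:ℤ)^(p.1:ℕ) • ((-1:ℤ)^(p.2:ℕ) • Finsupp.single (face (face t p.1) p.2) (1:ℤ)) with hF
  suffices hps : ∑ p : Fin (m+2) × Fin (m+1), F p = 0 by
    rw [Fintype.sum_prod_type] at hps; exact hps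
  have hface : ∀ (j : Fin (m+2)) (l : Fin (m+1)) (h : (j:ℕ) ≤ (l:ℕ)),
      face (face t j) l = face (face t l.succ) ⟨(j:ℕ), h.trans_lt l.isLt⟩ := by
    intro j l h
    funext x
    show t (j.succAbove (l.succAbove x)) = t (l.succ.succAbove _)
    rw [succAbove_succAbove j l h]
  set φ : Fin (m+2) × Fin (m+1) → Fin (m+2) × Fin (m+1) := fun p =>
    if h : (p.1:ℕ) ≤ (p.2:ℕ) then (p.2.succ, ⟨(p.1:ℕ), h.trans_lt p.2.isLt⟩)
    else (⟨(p.2:ℕ), by omega⟩, ⟨(p.1:ℕ)-1, by have := p.1.isLt; omega⟩) with hφ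
  have key : ∀ p : Fin (m+2) × Fin (m+1), ((p.1:ℕ) ≤ (p.2:ℕ)) → F p + F (φ p) = 0 := by
    rintro ⟨j, l⟩ h
    have : φ (j, l) = (l.succ, ⟨(j:ℕ), h.trans_lt l.isLt⟩) := by simp [hφ, h]
    rw [this]
    simp only [hF, smul_smul, ← add_smul, hface j l h, Fin.val_succ]
    have : (-1:ℤ)^(j:ℕ) * (-1)^(l:ℕ) + (-1)^((l:ℕ)+1) * (-1)^((⟨(j:ℕ), h.trans_lt l.isLt⟩ : Fin (m+1)):ℕ) = 0 := by
      simp [pow_succ]; ring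
    rw [this, zero_smul]
  have v1 : ∀ p : Fin (m+2) × Fin (m+1),
      ((φ p).1 : ℕ) = if (p.1:ℕ) ≤ (p.2:ℕ) then (p.2:ℕ)+1 else (p.2:ℕ) := by
    rintro ⟨j, l⟩
    by_cases h : (j:ℕ) ≤ (l:ℕ) <;> simp [hφ, h]
  have v2 : ∀ p : Fin (m+2) × Fin (m+1),
      ((φ p).2 : ℕ) = if (p.1:ℕ) ≤ (p.2:ℕ) then (p.1:ℕ) else (p.1:ℕ)-1 := by
    rintro ⟨j, l⟩
    by_cases h : (j:ℕ) ≤ (l:ℕ) <;> simp [hφ, h]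
  have hinv : ∀ p : Fin (m+2) × Fin (m+1), φ (φ p) = p := by
    intro p
    have a1 := v1 p; have a2 := v2 p; have b1 := v1 (φ p); have b2 := v2 (φ p)
    have hb1 := p.1.isLt; have hb2 := p.2.isLt
    rw [Prod.ext_iff]
    constructor <;> apply Fin.ext <;> split_ifs at a1 a2 b1 b2 <;> omega
  have hne : ∀ p : Fin (m+2) × Fin (m+1), φ p ≠ p := by
    intro p heq
    have a1 := v1 p
    rw [heq] at a1
    split_ifs at a1 <;> omega
  refine Finset.sum_involution (fun p _ => φ p) ?_ ?_ (fun p _ => Finset.mem_univ _) ?_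
  · intro p _
    by_cases h : (p.1:ℕ) ≤ (p.2:ℕ)
    · exact key p h
    · have h2 : ((φ p).1 : ℕ) ≤ ((φ p).2 : ℕ) := by
        have a1 := v1 p; have a2 := v2 p
        rw [a1, a2, if_neg h, if_neg h]; omega
      have := key (φ p) h2
      rw [hinv p] at this
      rw [add_comm]
      exact this
  · intro p _ _
    exact hne p
  · intro p _
    exact hinv p


lemma single_eq_smul {α : Type*} (t : α) (c : ℤ) :
    (Finsupp.single t c : α →₀ ℤ) = c • Finsupp.single t (1:ℤ) := by
  rw [Finsupp.smul_single]; simp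

lemma bd_bd {m : ℕ} (w : Ch I (m+2)) : bd (bd w) = 0 := by
  have : ((bd : Ch I (m+1) →ₗ[ℤ] Ch I m).comp (bd : Ch I (m+2) →ₗ[ℤ] Ch I (m+1))) = 0 := by
    apply Finsupp.lhom_ext
    intro t c
    rw [single_eq_smul]
    simp only [LinearMap.comp_apply, map_smul, bd_bd_single, smul_zero, LinearMap.zero_apply]
  exact DFunLike.congr_fun this w

lemma face_cons_zero {m : ℕ} (a : I) (t : Fin (m+1) → I) : face (Fin.cons a t) 0 = t := by
  funext x
  simp only [face, Fin.succAbove_zero, Fin.cons_succ]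

lemma face_cons_succ {m : ℕ} (a : I) (t : Fin (m+1) → I) (j : Fin (m+1)) :
    face (Fin.cons a t) j.succ = Fin.cons a (face t j) := by
  funext x
  induction x using Fin.cases with
  | zero => simp only [face, Fin.succ_succAbove_zero, Fin.cons_zero]
  | succ y => simp only [face, Fin.succ_succAbove_succ, Fin.cons_succ]

/-- Cone identity : ∂(cone a w) = w - cone a (∂ w). -/
lemma bd_cone {m : ℕ} (a : I) (w : Ch I (m+1)) :
    bd (cone a w) = w - cone a (bd w) := by
  have : ((bd : Ch I (m+2) →ₗ[ℤ] Ch I (m+1)).comp (cone a))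
      = LinearMap.id - (cone a).comp (bd : Ch I (m+1) →ₗ[ℤ] Ch I m) := by
    apply Finsupp.lhom_ext
    intro t c
    rw [single_eq_smul]
    simp only [LinearMap.comp_apply, map_smul, LinearMap.sub_apply, LinearMap.id_apply]
    congr 1
    rw [cone_single, bd_single, bd_single, map_sum]
    rw [Fin.sum_univ_succ]
    have e0 : face (Fin.cons a t) 0 = t := face_cons_zero a t
    rw [e0]
    simp only [Fin.val_zero, pow_zero, one_smul]
    have : ∀ j : Fin (m+1), (-1:ℤ)^((j.succ : Fin (m+2)):ℕ) • Finsupp.single (face (Fin.cons a t) j.succ) (1:ℤ)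
        = - ((-1:ℤ)^(j:ℕ) • cone a (Finsupp.single (face t j) (1:ℤ))) := by
      intro j
      rw [face_cons_succ, cone_single, Fin.val_succ, pow_succ]
      rw [← neg_smul]
      ring_nf
    rw [Finset.sum_congr rfl (fun j _ => this j)]
    rw [Finset.sum_neg_distrib]
    abel_nf
    simp only [map_smul]
  exact DFunLike.congr_fun this w

section SortSign

variable {β : Type*} [LinearOrder β]

open Equiv Equiv.Perm

/-- Rearrangement + sign lemma for sorting a face of an injective tuple. -/
lemma sort_face {m : ℕ} (v : Fin (m+1) → β) (hv : Function.Injective v) (j : Fin (m+1)) :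
    (fun x => v (j.succAbove ((Tuple.sort (fun y => v (j.succAbove y))) x)))
      = (fun x => v ((Tuple.sort v) (((Tuple.sort v)⁻¹ j).succAbove x)))
    ∧ ((Equiv.Perm.sign (Tuple.sort (fun y => v (j.succAbove y)))) : ℤ)
      = (-1)^((j:ℕ) + ((((Tuple.sort v)⁻¹ j) : Fin (m+1)):ℕ))
          * ((Equiv.Perm.sign (Tuple.sort v)) : ℤ) := by
  classical
  set σ := Tuple.sort v with hσ
  set j' := σ⁻¹ j with hj'
  have hσj' : σ j' = j := Equiv.apply_symm_apply σ j
  -- construct ω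
  have hne : ∀ x : Fin m, σ (j'.succAbove x) ≠ j := by
    intro x h
    exact Fin.succAbove_ne j' x (by
      apply σ.injective
      rw [h, hσj'])
  have hex : ∀ x : Fin m, ∃ z : Fin m, j.succAbove z = σ (j'.succAbove x) := by
    intro x
    exact Fin.exists_succAbove_eq (hne x)
  choose ωf hωf using hex
  have hωinj : Function.Injective ωf := by
    intro x y hxy
    have : σ (j'.succAbove x) = σ (j'.succAbove y) := by
      rw [← hωf x, ← hωf y, hxy]
    exact Fin.succAbove_right_injective (σ.injective this)
  have hωbij : Function.Bijective ωf := (Finite.injective_iff_bijective).1 hωinj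
  set ω : Equiv.Perm (Fin m) := Equiv.ofBijective ωf hωbij with hω
  have Pω : ∀ x : Fin m, j.succAbove (ω x) = σ (j'.succAbove x) := fun x => hωf x
  -- ω = sort of face
  have hmono : Monotone (fun x => (fun y => v (j.succAbove y)) (ω x)) := by
    have : (fun x => v (j.succAbove (ω x))) = fun x => (v ∘ σ) (j'.succAbove x) := by
      funext x; simp [Pω x]
    show Monotone (fun x => v (j.succAbove (ω x)))
    rw [this]
    exact (Tuple.monotone_sort v).comp (Fin.succAboveOrderEmb j').monotone
  have hfaceinj : Function.Injective (fun y => v (j.succAbove y)) :=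
    hv.comp Fin.succAbove_right_injective
  set τ := Tuple.sort (fun y => v (j.succAbove y)) with hτ
  have hmonoτ : Monotone ((fun y => v (j.succAbove y)) ∘ τ) := Tuple.monotone_sort _
  have huniq : (fun y => v (j.succAbove y)) ∘ ω = (fun y => v (j.succAbove y)) ∘ τ :=
    Tuple.unique_monotone hmono hmonoτ
  have hωτ : ω = τ := by
    apply Equiv.ext
    intro x
    exact hfaceinj (congrFun huniq x)
  constructor
  · funext x
    have := congrFun huniq x
    rw [← hωτ]
    show v (j.succAbove (ω x)) = _
    rw [Pω x]
  · -- sign computation via determinants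
    rw [← hωτ]
    have hdet : Matrix.det (σ.permMatrix ℤ) = (Equiv.Perm.sign σ : ℤ) :=
      Matrix.det_permutation σ
    have hexp := Matrix.det_succ_row (σ.permMatrix ℤ) j'
    have hentry : ∀ q : Fin (m+1), (σ.permMatrix ℤ) j' q = if σ j' = q then 1 else 0 := by
      intro q
      simp [Equiv.Perm.permMatrix, PEquiv.toMatrix_apply, Equiv.toPEquiv_apply, eq_comm]
    have hsum : Matrix.det (σ.permMatrix ℤ)
        = (-1)^((j':ℕ) + (j:ℕ)) * Matrix.det ((σ.permMatrix ℤ).submatrix j'.succAbove j.succAbove) := by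
      rw [hexp]
      rw [Finset.sum_eq_single j]
      · rw [hentry j, if_pos hσj']
        ring
      · intro q _ hq
        rw [hentry q, if_neg (by rw [hσj']; exact fun hc => hq hc.symm)]
        ring
      · intro hj; exact absurd (Finset.mem_univ j) hj
    have hsub : (σ.permMatrix ℤ).submatrix j'.succAbove j.succAbove = ω.permMatrix ℤ := by
      apply Matrix.ext
      intro a b
      simp only [Matrix.submatrix_apply]
      have h1 : (σ.permMatrix ℤ) (j'.succAbove a) (j.succAbove b)
          = if σ (j'.succAbove a) = j.succAbove b then 1 else 0 := by
        simp [Equiv.Perm.permMatrix, PEquiv.toMatrix_apply, Equiv.toPEquiv_apply, eq_comm]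
      have h2 : (ω.permMatrix ℤ) a b = if ω a = b then 1 else 0 := by
        simp [Equiv.Perm.permMatrix, PEquiv.toMatrix_apply, Equiv.toPEquiv_apply, eq_comm]
      rw [h1, h2, ← Pω a]
      by_cases h : ω a = b
      · rw [if_pos h, if_pos (by rw [h])]
      · rw [if_neg h, if_neg (fun hc => h (Fin.succAbove_right_injective hc))]
    rw [hsub, Matrix.det_permutation ω] at hsum
    rw [hdet] at hsum
    have h1 : (-1:ℤ)^((j:ℕ)+(j':ℕ)) * (-1)^((j':ℕ)+(j:ℕ)) = 1 := by
      rw [← pow_add]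
      exact Even.neg_one_pow ⟨(j:ℕ)+(j':ℕ), by ring⟩
    have h2 := congrArg (fun z : ℤ => (-1:ℤ)^((j:ℕ)+(j':ℕ)) * z) hsum
    rw [← mul_assoc, h1, one_mul] at h2
    exact h2.symm

end SortSign

section Alt

variable [LinearOrder I]

noncomputable def altT {m : ℕ} (t : Fin m → I) : Ch I m :=
  if Function.Injective t then
    ((Equiv.Perm.sign (Tuple.sort t) : ℤ)) • Finsupp.single (fun x => t (Tuple.sort t x)) 1
  else 0

noncomputable def altL {m : ℕ} : Ch I m →ₗ[ℤ] Ch I m := Finsupp.lift _ ℤ _ altT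

lemma altL_single {m : ℕ} (t : Fin m → I) : altL (Finsupp.single t (1:ℤ)) = altT t := by
  simp [altL]

lemma altT_one (t : Fin 1 → I) : altT t = Finsupp.single t 1 := by
  have hinj : Function.Injective t := fun a b _ => Subsingleton.elim a b
  have hσ : Tuple.sort t = 1 := Equiv.ext fun x => Subsingleton.elim _ _
  rw [altT, if_pos hinj, hσ]
  simp

lemma altT_zero_tuple (t : Fin 0 → I) : altT t = Finsupp.single t 1 := by
  have hinj : Function.Injective t := fun a => absurd a.isLt (by omega)
  have hσ : Tuple.sort t = 1 := Equiv.ext fun x => absurd x.isLt (by omega)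
  rw [altT, if_pos hinj, hσ]
  simp

/-- chain map property of the alternator, injective case. -/
lemma bd_altT_inj {m : ℕ} (t : Fin (m+1) → I) (hinj : Function.Injective t) :
    bd (altT t) = ∑ j : Fin (m+1), (-1:ℤ)^(j:ℕ) • altT (face t j) := by
  classical
  set σ := Tuple.sort t with hσdef
  have pow_cancel : ∀ a b : ℕ, (-1:ℤ)^a * (-1)^(a+b) = (-1)^b := by
    intro a b
    rw [← pow_add, show a+(a+b) = 2*a + b by ring, pow_add, pow_mul]
    simp
  -- RHS rewrite using sort_face
  have hterm : ∀ j : Fin (m+1), altT (face t j)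
      = ((-1:ℤ)^((j:ℕ) + ((σ⁻¹ j : Fin (m+1)):ℕ)) * (Equiv.Perm.sign σ : ℤ)) •
          Finsupp.single (face (fun x => t (σ x)) (σ⁻¹ j)) 1 := by
    intro j
    have hfi : Function.Injective (face t j) := hinj.comp Fin.succAbove_right_injective
    obtain ⟨heq, hsign⟩ := sort_face t hinj j
    rw [altT, if_pos hfi]
    have e1 : (fun x => (face t j) (Tuple.sort (face t j) x)) = face (fun x => t (σ x)) (σ⁻¹ j) := by
      funext x
      have := congrFun heq x
      exact this
    have hsign' : ((Equiv.Perm.sign (Tuple.sort (face t j))):ℤ)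
        = (-1:ℤ)^((j:ℕ) + ((σ⁻¹ j : Fin (m+1)):ℕ)) * ((Equiv.Perm.sign σ):ℤ) := hsign
    rw [e1, hsign']
  have LHS : bd (altT t) = ∑ j : Fin (m+1),
      ((-1:ℤ)^(j:ℕ) * (Equiv.Perm.sign σ : ℤ)) • Finsupp.single (face (fun x => t (σ x)) j) 1 := by
    rw [altT, if_pos hinj]
    rw [map_smul, bd_single, Finset.smul_sum]
    apply Finset.sum_congr rfl
    intro j _
    rw [smul_smul, mul_comm]
  rw [LHS]
  have RHS : ∑ j : Fin (m+1), (-1:ℤ)^(j:ℕ) • altT (face t j)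
      = ∑ j : Fin (m+1), ((-1:ℤ)^(((σ⁻¹ : Equiv.Perm (Fin (m+1))) j : Fin (m+1)):ℕ) * (Equiv.Perm.sign σ : ℤ)) •
          Finsupp.single (face (fun x => t (σ x)) (σ⁻¹ j)) 1 := by
    apply Finset.sum_congr rfl
    intro j _
    rw [hterm j, smul_smul, ← mul_assoc, pow_cancel]
  rw [RHS]
  rw [← Equiv.sum_comp σ (fun j =>
    ((-1:ℤ)^(((σ⁻¹ : Equiv.Perm (Fin (m+1))) j : Fin (m+1)):ℕ) * (Equiv.Perm.sign σ : ℤ)) •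
      Finsupp.single (face (fun x => t (σ x)) (σ⁻¹ j)) 1)]
  apply Finset.sum_congr rfl
  intro j _
  simp only [Equiv.Perm.inv_def, Equiv.symm_apply_apply]

end Alt

section AltNotInj

variable [LinearOrder I]

lemma lex_fst_mono {γ : Type*} [PartialOrder γ] {δ : Type*} [Preorder δ]
    {u w : γ ×ₗ δ} (h : u ≤ w) : (ofLex u).1 ≤ (ofLex w).1 := by
  rcases Prod.Lex.le_iff.1 h with h1 | h2
  · exact le_of_lt h1
  · exact le_of_eq h2.1

lemma pair_cancel {m : ℕ} (t : Fin (m+1) → I) (a b : Fin (m+1)) (hab : a < b) (hv : t a = t b)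
    (hu : ∀ z, t z = t a → z = a ∨ z = b)
    (hfa : Function.Injective (face t a)) (hfb : Function.Injective (face t b)) :
    (-1:ℤ)^((a:ℕ)) • altT (face t a) + (-1:ℤ)^((b:ℕ)) • altT (face t b) = 0 := by
  classical
  set th : Fin (m+1) → I ×ₗ (Fin (m+1)) := fun p => toLex (t p, p) with hth
  have hthinj : Function.Injective th := by
    intro x y hxy
    have := congrArg (fun z => (ofLex z).2) hxy
    exact this
  set σ := Tuple.sort th with hσ
  set p := σ⁻¹ a with hp
  set q := σ⁻¹ b with hq
  have hσp : σ p = a := Equiv.apply_symm_apply σ a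
  have hσq : σ q = b := Equiv.apply_symm_apply σ b
  have hsmono : Monotone (fun x => th (σ x)) := Tuple.monotone_sort th
  have hsinj : Function.Injective (fun x => th (σ x)) := hthinj.comp σ.injective
  have hsstrict : StrictMono (fun x => th (σ x)) := hsmono.strictMono_of_injective hsinj
  have hthab : th a < th b := by
    rw [hth]
    exact Prod.Lex.lt_iff.2 (Or.inr ⟨hv, hab⟩)
  have hpq : p < q := by
    have : th (σ p) < th (σ q) := by rw [hσp, hσq]; exact hthab
    exact hsstrict.lt_iff_lt.1 this
  have hadj : (q:ℕ) = (p:ℕ) + 1 := by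
    by_contra hne
    have hr : ((p:ℕ)+1) < m+1 := by have := q.isLt; omega
    set r : Fin (m+1) := ⟨(p:ℕ)+1, hr⟩ with hrdef
    have h1 : p < r := by rw [Fin.lt_def]; simp [hrdef]
    have h2 : r < q := by rw [Fin.lt_def]; have := Fin.lt_def.1 hpq; simp [hrdef]; omega
    have l1 : th a < th (σ r) := by
      have h' : th (σ p) < th (σ r) := hsstrict h1
      rwa [hσp] at h'
    have l2 : th (σ r) < th b := by
      have h' : th (σ r) < th (σ q) := hsstrict h2
      rwa [hσq] at h'
    have hz : t (σ r) = t a := by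
      rcases Prod.Lex.lt_iff.1 l1 with c1 | c1
      · exfalso
        have c1' : t a < t (σ r) := c1
        rcases Prod.Lex.lt_iff.1 l2 with c2 | c2
        · have c2' : t (σ r) < t b := c2
          exact absurd ((c1'.trans c2').trans_eq hv.symm) (lt_irrefl _)
        · have c2' : t (σ r) = t b := c2.1
          exact absurd ((c1'.trans_eq c2').trans_eq hv.symm) (lt_irrefl _)
      · have c1' : t a = t (σ r) := c1.1
        exact c1'.symm
    rcases hu (σ r) hz with hza | hzb
    · have : r = p := σ.injective (by rw [hσp, hza])
      rw [this] at h1; exact absurd h1 (lt_irrefl _)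
    · have : r = q := σ.injective (by rw [hσq, hzb])
      rw [this] at h2; exact absurd h2 (lt_irrefl _)
  -- apply sort_face at a and b
  obtain ⟨heqa, hsigna⟩ := sort_face th hthinj a
  obtain ⟨heqb, hsignb⟩ := sort_face th hthinj b
  -- identify the sorts of lex faces with sorts of plain faces
  have idsort : ∀ (j : Fin (m+1)), Function.Injective (face t j) →
      Tuple.sort (fun y => th (j.succAbove y)) = Tuple.sort (face t j) := by
    intro j hfj
    set τh := Tuple.sort (fun y => th (j.succAbove y)) with hτh
    have m1 : Monotone (fun x => th (j.succAbove (τh x))) := by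
      have h1 : Monotone ((fun y => th (j.succAbove y)) ∘ τh) := Tuple.monotone_sort _
      exact h1
    have m2 : Monotone ((face t j) ∘ τh) := by
      intro x y hxy
      exact lex_fst_mono (m1 hxy)
    have := Tuple.unique_monotone m2 (Tuple.monotone_sort (face t j))
    apply Equiv.ext
    intro x
    exact hfj (congrFun this x)
  have τa := idsort a hfa
  have τb := idsort b hfb
  -- sorted faces coincide
  have sorteq : (fun x => (face t a) ((Tuple.sort (face t a)) x))
      = (fun x => (face t b) ((Tuple.sort (face t b)) x)) := by
    funext x
    have e1 : (face t a) ((Tuple.sort (face t a)) x) = t (σ (p.succAbove x)) := by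
      rw [← τa]
      have := congrFun heqa x
      exact congrArg (fun z => (ofLex z).1) this
    have e2 : (face t b) ((Tuple.sort (face t b)) x) = t (σ (q.succAbove x)) := by
      rw [← τb]
      have := congrFun heqb x
      exact congrArg (fun z => (ofLex z).1) this
    rw [e1, e2]
    rcases lt_trichotomy ((x:ℕ)) ((p:ℕ)) with hc | hc | hc
    · have : p.succAbove x = q.succAbove x := by
        apply Fin.ext
        rw [val_succAbove, val_succAbove, if_pos hc, if_pos (by omega)]
      rw [this]
    · have e3 : p.succAbove x = q := by
        apply Fin.ext
        rw [val_succAbove, if_neg (by omega), hadj, hc]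
      have e4 : q.succAbove x = p := by
        apply Fin.ext
        rw [val_succAbove, if_pos (by omega), hc]
      rw [e3, e4, hσp, hσq, hv]
    · have : p.succAbove x = q.succAbove x := by
        apply Fin.ext
        rw [val_succAbove, val_succAbove, if_neg (by omega), if_neg (by omega)]
      rw [this]
  -- final computation
  have ina : altT (face t a) = ((Equiv.Perm.sign (Tuple.sort (face t a)) : ℤ)) •
      Finsupp.single (fun x => (face t a) ((Tuple.sort (face t a)) x)) 1 := by
    rw [altT, if_pos hfa]
  have inb : altT (face t b) = ((Equiv.Perm.sign (Tuple.sort (face t b)) : ℤ)) •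
      Finsupp.single (fun x => (face t b) ((Tuple.sort (face t b)) x)) 1 := by
    rw [altT, if_pos hfb]
  rw [ina, inb, ← sorteq]
  rw [smul_smul, smul_smul, ← add_smul]
  convert zero_smul ℤ _
  have sa : ((Equiv.Perm.sign (Tuple.sort (face t a)) : ℤ))
      = (-1:ℤ)^((a:ℕ) + (p:ℕ)) * ((Equiv.Perm.sign σ : ℤ)) := by
    rw [← τa]; exact hsigna
  have sb : ((Equiv.Perm.sign (Tuple.sort (face t b)) : ℤ))
      = (-1:ℤ)^((b:ℕ) + (q:ℕ)) * ((Equiv.Perm.sign σ : ℤ)) := by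
    rw [← τb]; exact hsignb
  rw [sa, sb]
  have pc : ∀ u v : ℕ, (-1:ℤ)^u * ((-1)^(u+v) * (Equiv.Perm.sign σ : ℤ))
      = (-1:ℤ)^v * (Equiv.Perm.sign σ : ℤ) := by
    intro u v
    rw [← mul_assoc, ← pow_add, show u+(u+v) = 2*u + v by ring, pow_add, pow_mul]
    simp
  rw [pc, pc, hadj, pow_succ]
  ring
end AltNotInj

section ChainMap

variable [LinearOrder I]

lemma bd_altT_notinj {m : ℕ} (t : Fin (m+1) → I) (hninj : ¬ Function.Injective t) :
    ∑ j : Fin (m+1), (-1:ℤ)^(j:ℕ) • altT (face t j) = 0 := by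
  classical
  by_cases hall : ∀ j : Fin (m+1), ¬ Function.Injective (face t j)
  · apply Finset.sum_eq_zero
    intro j _
    rw [altT, if_neg (hall j), smul_zero]
  · push_neg at hall
    obtain ⟨c, hc⟩ := hall
    -- t has a unique collision pair {c, d}
    have U1 : ∀ p q : Fin (m+1), p ≠ q → t p = t q → p = c ∨ q = c := by
      intro p q hpq hval
      by_contra hcon
      push_neg at hcon
      obtain ⟨p', hp'⟩ := Fin.exists_succAbove_eq hcon.1
      obtain ⟨q', hq'⟩ := Fin.exists_succAbove_eq hcon.2
      have : face t c p' = face t c q' := by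
        show t (c.succAbove p') = t (c.succAbove q')
        rw [hp', hq', hval]
      have := hc this
      apply hpq
      rw [← hp', ← hq', this]
    obtain ⟨x, y, hval, hxy⟩ := Function.not_injective_iff.1 hninj
    have hcxy : c = x ∨ c = y := by
      rcases U1 x y hxy hval with h | h
      · exact Or.inl h.symm
      · exact Or.inr h.symm
    set d : Fin (m+1) := if c = x then y else x with hd
    have hcd : c ≠ d := by
      rcases hcxy with h | h
      · rw [hd, if_pos h, h]; exact hxy
      · by_cases h2 : c = x
        · rw [hd, if_pos h2, h2]; exact hxy
        · rw [hd, if_neg h2, h]; exact fun hh => h2 (h ▸ hh.symm ▸ rfl)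
    have hvcd : t c = t d := by
      by_cases h2 : c = x
      · rw [hd, if_pos h2, h2]; exact hval
      · rcases hcxy with h | h
        · exact absurd h h2
        · rw [hd, if_neg h2, h]; exact hval.symm
    have U2 : ∀ z : Fin (m+1), z ≠ c → t z = t c → z = d := by
      intro z hzc hzval
      by_contra hzd
      obtain ⟨z', hz'⟩ := Fin.exists_succAbove_eq hzc
      obtain ⟨d', hdd⟩ := Fin.exists_succAbove_eq (Ne.symm hcd)
      have : face t c z' = face t c d' := by
        show t (c.succAbove z') = t (c.succAbove d')
        rw [hz', hdd, hzval, hvcd]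
      have := hc this
      apply hzd
      rw [← hz', ← hdd, this]
    -- injectivity of face at d
    have hfd : Function.Injective (face t d) := by
      intro x' y' hxy'
      by_contra hne
      have hps : d.succAbove x' ≠ d.succAbove y' := fun hh => hne (Fin.succAbove_right_injective hh)
      have hval' : t (d.succAbove x') = t (d.succAbove y') := hxy'
      rcases U1 _ _ hps hval' with h | h
      · have h2 : d.succAbove y' ≠ c := by
          rw [← h]
          intro hh
          exact hps (by rw [hh, h])
        have := U2 _ h2 (by rw [← hval', h])
        exact Fin.succAbove_ne d y' this
      · have h2 : d.succAbove x' ≠ c := by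
          rw [← h]
          intro hh
          exact hps (by rw [hh, h])
        have := U2 _ h2 (by rw [hval', h])
        exact Fin.succAbove_ne d x' this
    -- all other faces vanish
    have hvanish : ∀ j : Fin (m+1), j ≠ c → j ≠ d → altT (face t j) = 0 := by
      intro j hjc hjd
      rw [altT, if_neg]
      intro hfj
      obtain ⟨c', hc'⟩ := Fin.exists_succAbove_eq (Ne.symm hjc)
      obtain ⟨d', hdd⟩ := Fin.exists_succAbove_eq (Ne.symm hjd)
      have hne' : c' ≠ d' := by
        intro hh
        exact hcd (by rw [← hc', ← hdd, hh])
      apply hne'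
      apply hfj
      show t (j.succAbove c') = t (j.succAbove d')
      rw [hc', hdd, hvcd]
    -- reduce sum to two terms
    have hsum : ∑ j : Fin (m+1), (-1:ℤ)^(j:ℕ) • altT (face t j)
        = ∑ j ∈ ({c, d} : Finset (Fin (m+1))), (-1:ℤ)^(j:ℕ) • altT (face t j) := by
      symm
      apply Finset.sum_subset (Finset.subset_univ _)
      intro j _ hj
      simp only [Finset.mem_insert, Finset.mem_singleton] at hj
      push_neg at hj
      rw [hvanish j hj.1 hj.2, smul_zero]
    rw [hsum, Finset.sum_pair hcd]
    rcases lt_or_gt_of_ne hcd with hlt | hgt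
    · refine pair_cancel t c d hlt hvcd ?_ hc hfd
      intro z hz
      by_cases hzc : z = c
      · exact Or.inl hzc
      · exact Or.inr (U2 z hzc hz)
    · rw [add_comm]
      refine pair_cancel t d c hgt hvcd.symm ?_ hfd hc
      intro z hz
      by_cases hzd : z = d
      · exact Or.inl hzd
      · right
        by_contra hzc
        exact hzd (U2 z hzc (hz.trans hvcd.symm))

/-- The alternator is a chain map. -/
lemma bd_altL {m : ℕ} (w : Ch I (m+1)) : bd (altL w) = altL (bd w) := by
  have : ((bd : Ch I (m+1) →ₗ[ℤ] Ch I m).comp altL)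
      = altL.comp (bd : Ch I (m+1) →ₗ[ℤ] Ch I m) := by
    apply Finsupp.lhom_ext
    intro t c
    rw [single_eq_smul]
    simp only [LinearMap.comp_apply, map_smul]
    congr 1
    rw [altL_single, bd_single, map_sum]
    simp only [map_smul, altL_single]
    by_cases hinj : Function.Injective t
    · exact bd_altT_inj t hinj
    · rw [altT, if_neg hinj, map_zero]
      exact (bd_altT_notinj t hinj).symm
  exact DFunLike.congr_fun this w

end ChainMap

section Homotopy

variable [LinearOrder I]

noncomputable def Kh : (m : ℕ) → Ch I m →ₗ[ℤ] Ch I (m+1)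
  | 0 => 0
  | (m+1) => Finsupp.lift _ ℤ _ (fun t : Fin (m+1) → I =>
      cone (t 0) (Finsupp.single t 1 - altT t - Kh m (bd (Finsupp.single t 1))))

lemma Kh_zero (w : Ch I 0) : Kh 0 w = 0 := rfl

lemma Kh_single {m : ℕ} (t : Fin (m+1) → I) :
    Kh (m+1) (Finsupp.single t (1:ℤ))
      = cone (t 0) (Finsupp.single t 1 - altT t - Kh m (bd (Finsupp.single t 1))) := by
  rw [Kh]
  simp

/-- The key homotopy identity: ∂K + K∂ = id - alt. -/
lemma homotopy : ∀ (m : ℕ) (w : Ch I (m+1)),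
    bd (Kh (m+1) w) + Kh m (bd w) = w - altL w := by
  intro m
  induction m with
  | zero =>
    intro w
    have hmap : (bd.comp (Kh 1) + (Kh 0).comp (bd : Ch I 1 →ₗ[ℤ] Ch I 0))
        = (LinearMap.id - (altL : Ch I 1 →ₗ[ℤ] Ch I 1)) := by
      apply Finsupp.lhom_ext
      intro t c
      rw [single_eq_smul]
      simp only [LinearMap.add_apply, LinearMap.comp_apply, map_smul, LinearMap.sub_apply,
        LinearMap.id_apply]
      congr 1
      rw [Kh_single, altT_one, altL_single, altT_one]
      have h0 : Kh 0 (bd (Finsupp.single t (1:ℤ))) = 0 := rfl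
      rw [h0]
      simp
    exact DFunLike.congr_fun hmap w
  | succ m IH =>
    intro w
    have hmap : (bd.comp (Kh (m+2)) + (Kh (m+1)).comp (bd : Ch I (m+2) →ₗ[ℤ] Ch I (m+1)))
        = (LinearMap.id - (altL : Ch I (m+2) →ₗ[ℤ] Ch I (m+2))) := by
      apply Finsupp.lhom_ext
      intro t c
      rw [single_eq_smul]
      simp only [LinearMap.add_apply, LinearMap.comp_apply, map_smul, LinearMap.sub_apply,
        LinearMap.id_apply]
      congr 1
      rw [Kh_single]
      set X : Ch I (m+2) :=
        Finsupp.single t 1 - altT t - Kh (m+1) (bd (Finsupp.single t 1)) with hX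
      have hbdX : bd X = 0 := by
        rw [hX]
        simp only [map_sub]
        have h1 := IH (bd (Finsupp.single t (1:ℤ)))
        rw [bd_bd, map_zero, add_zero] at h1
        rw [h1]
        have h2 : bd (altT t) = altL (bd (Finsupp.single t (1:ℤ))) := by
          rw [← altL_single]
          exact bd_altL (Finsupp.single t 1)
        rw [h2]
        abel
      rw [bd_cone, hbdX, map_zero, sub_zero, hX]
      rw [altL_single]
      abel
    exact DFunLike.congr_fun hmap w

end Homotopy

section Supported

variable [LinearOrder I]

noncomputable def entriesIn (S : Set I) (m : ℕ) : Submodule ℤ (Ch I m) :=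
  Finsupp.supported ℤ ℤ {u : Fin m → I | ∀ k, u k ∈ S}

lemma map_entriesIn {m m' : ℕ} {S : Set I} {L : Ch I m →ₗ[ℤ] Ch I m'}
    (hL : ∀ u : Fin m → I, (∀ k, u k ∈ S) → L (Finsupp.single u 1) ∈ entriesIn S m')
    {w : Ch I m} (hw : w ∈ entriesIn S m) : L w ∈ entriesIn S m' := by
  have h1 : entriesIn S m ≤ (entriesIn S m').comap L := by
    rw [entriesIn, Finsupp.supported_eq_span_single, Submodule.span_le]
    rintro _ ⟨u, hu, rfl⟩
    exact hL u hu
  exact h1 hw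

lemma single_entriesIn {m : ℕ} {S : Set I} (u : Fin m → I) (hu : ∀ k, u k ∈ S) :
    Finsupp.single u (1:ℤ) ∈ entriesIn S m :=
  Finsupp.single_mem_supported ℤ 1 hu

lemma bd_entriesIn {m : ℕ} {S : Set I} {w : Ch I (m+1)} (hw : w ∈ entriesIn S (m+1)) :
    bd w ∈ entriesIn S m := by
  refine map_entriesIn ?_ hw
  intro u hu
  rw [bd_single]
  refine Submodule.sum_mem _ ?_
  intro j _
  refine Submodule.smul_mem _ _ ?_
  exact single_entriesIn _ (fun k => hu (j.succAbove k))

lemma altT_entriesIn {m : ℕ} {S : Set I} (u : Fin m → I) (hu : ∀ k, u k ∈ S) :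
    altT u ∈ entriesIn S m := by
  rw [altT]
  split_ifs
  · exact Submodule.smul_mem _ _ (single_entriesIn _ (fun k => hu _))
  · exact zero_mem _

lemma altL_entriesIn {m : ℕ} {S : Set I} {w : Ch I m} (hw : w ∈ entriesIn S m) :
    altL w ∈ entriesIn S m := by
  refine map_entriesIn ?_ hw
  intro u hu
  rw [altL_single]
  exact altT_entriesIn u hu

lemma cone_entriesIn {m : ℕ} {S : Set I} {a : I} (ha : a ∈ S) {w : Ch I m}
    (hw : w ∈ entriesIn S m) : cone a w ∈ entriesIn S (m+1) := by
  refine map_entriesIn ?_ hw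
  intro u hu
  rw [cone_single]
  refine single_entriesIn _ ?_
  intro k
  induction k using Fin.cases with
  | zero => simpa using ha
  | succ y => simpa using hu y

lemma Kh_entriesIn {S : Set I} : ∀ (m : ℕ) (w : Ch I m), w ∈ entriesIn S m →
    Kh m w ∈ entriesIn S (m+1) := by
  intro m
  induction m with
  | zero =>
    intro w _
    rw [Kh_zero]
    exact zero_mem _
  | succ m IH =>
    intro w hw
    refine map_entriesIn ?_ hw
    intro u hu
    rw [Kh_single]
    refine cone_entriesIn (hu 0) ?_
    refine sub_mem (sub_mem (single_entriesIn u hu) (altT_entriesIn u hu)) ?_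
    exact IH _ (bd_entriesIn (single_entriesIn u hu))

end Supported

end CocycleAlt

open CocycleAlt

/-- **Every cocycle is cohomologous to an alternating cocycle.**
Let `(A_i)_{i∈I}` be a family of subgroups of an abelian group `A` and `n > 0`.
Any `n`-cocycle `f` is cohomologous (via a cochain `h`) to a cocycle `g` which is
alternating: `g` vanishes modulo `A_{i₀} + ⋯ + A_{iₙ}` on tuples with a repeated
entry, and `g(i∘π) ≡ sign(π) • g(i)` for every permutation `π` on tuples with
pairwise distinct entries. -/
theorem cocycle_cohomologous_to_alternating
    {A : Type*} [AddCommGroup A] {I : Type*} (Ai : I → AddSubgroup A)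
    (n : ℕ) (hn : 0 < n) (f : (Fin (n + 1) → I) → A)
    (hf : ∀ i : Fin (n + 2) → I,
      (∑ j : Fin (n + 2), (-1 : ℤ) ^ (j : ℕ) • f (fun k => i (j.succAbove k)))
        ∈ ⨆ k, Ai (i k)) :
    ∃ (g : (Fin (n + 1) → I) → A) (h : (Fin n → I) → A),
      (∀ i : Fin (n + 1) → I, ¬ Function.Injective i → g i ∈ ⨆ k, Ai (i k)) ∧
      (∀ i : Fin (n + 1) → I, Function.Injective i →
        ∀ π : Equiv.Perm (Fin (n + 1)),
          g (fun k => i (π k)) - ((Equiv.Perm.sign π : ℤ) • g i) ∈ ⨆ k, Ai (i k)) ∧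
      (∀ i : Fin (n + 2) → I,
        (∑ j : Fin (n + 2), (-1 : ℤ) ^ (j : ℕ) • g (fun k => i (j.succAbove k)))
          ∈ ⨆ k, Ai (i k)) ∧
      (∀ i : Fin (n + 1) → I,
        f i - g i - (∑ j : Fin (n + 1), (-1 : ℤ) ^ (j : ℕ) • h (fun k => i (j.succAbove k)))
          ∈ ⨆ k, Ai (i k)) := by
  classical
  letI : LinearOrder I := IsWellOrder.linearOrder WellOrderingRel
  set pairF : Ch I (n+1) →ₗ[ℤ] A := (Finsupp.lift A ℤ (Fin (n+1) → I)) f with hpairF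
  have pairF_single : ∀ (u : Fin (n+1) → I) (c : ℤ), pairF (Finsupp.single u c) = c • f u := by
    intro u c
    rw [hpairF]
    simp
  set h : (Fin n → I) → A := fun t => pairF (Kh n (Finsupp.single t 1)) with hh
  set g : (Fin (n+1) → I) → A :=
    fun u => f u - ∑ j : Fin (n+1), (-1:ℤ)^(j:ℕ) • h (fun k => u (j.succAbove k)) with hg
  have hδh : ∀ u : Fin (n+1) → I,
      (∑ j : Fin (n+1), (-1:ℤ)^(j:ℕ) • h (fun k => u (j.succAbove k)))
        = pairF (Kh n (bd (Finsupp.single u 1))) := by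
    intro u
    rw [bd_single, map_sum, map_sum]
    apply Finset.sum_congr rfl
    intro j _
    rw [map_smul, map_smul, hh]
    rfl
  have hgrepr : ∀ u : Fin (n+1) → I,
      g u = pairF (altT u) + pairF (bd (Kh (n+1) (Finsupp.single u 1))) := by
    intro u
    have hid := homotopy n (Finsupp.single u (1:ℤ))
    have hid2 := congrArg pairF hid
    rw [map_add, map_sub, altL_single, pairF_single, one_smul] at hid2
    have h2 : pairF (Kh n (bd (Finsupp.single u (1:ℤ))))
        = f u - pairF (altT u) - pairF (bd (Kh (n+1) (Finsupp.single u 1))) := by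
      rw [← hid2]; abel
    show f u - ∑ j : Fin (n+1), (-1:ℤ)^(j:ℕ) • h (fun k => u (j.succAbove k)) = _
    rw [hδh u, h2]
    abel
  have hgrepr2 : ∀ u : Fin (n+1) → I,
      g u = f u - pairF (Kh n (bd (Finsupp.single u 1))) := by
    intro u
    show f u - ∑ j : Fin (n+1), (-1:ℤ)^(j:ℕ) • h (fun k => u (j.succAbove k)) = _
    rw [hδh u]
  have hKmem : ∀ (i : Fin (n+1) → I) (w : Ch I (n+2)),
      w ∈ entriesIn (Set.range i) (n+2) → pairF (bd w) ∈ ⨆ k, Ai (i k) := by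
    intro i w hw
    have hle : entriesIn (Set.range i) (n+2) ≤
        Submodule.comap (pairF ∘ₗ (bd : Ch I (n+2) →ₗ[ℤ] Ch I (n+1)))
          (AddSubgroup.toIntSubmodule (⨆ k, Ai (i k))) := by
      rw [entriesIn, Finsupp.supported_eq_span_single, Submodule.span_le]
      rintro _ ⟨u, hu, rfl⟩
      simp only [Set.mem_setOf_eq] at hu
      simp only [Set.mem_image, Submodule.mem_comap, LinearMap.comp_apply]
      have e1 : pairF (bd (Finsupp.single u (1:ℤ)))
          = ∑ j : Fin (n+2), (-1:ℤ)^(j:ℕ) • f (fun k => u (j.succAbove k)) := by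
        rw [bd_single, map_sum]
        apply Finset.sum_congr rfl
        intro j _
        rw [map_smul, pairF_single, one_smul]
        rfl
      show pairF (bd (Finsupp.single u 1)) ∈ AddSubgroup.toIntSubmodule (⨆ k, Ai (i k))
      rw [e1]
      have hle2 : (⨆ k, Ai (u k)) ≤ ⨆ k, Ai (i k) := by
        apply iSup_le
        intro k
        obtain ⟨k', hk'⟩ := hu k
        rw [← hk']
        exact le_iSup (fun k0 => Ai (i k0)) k'
      exact hle2 (hf u)
    exact hle hw
  refine ⟨g, h, ?_, ?_, ?_, ?_⟩
  · -- (1) vanishing on non-injective tuples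
    intro i hi
    rw [hgrepr i, altT, if_neg hi, map_zero, zero_add]
    exact hKmem i _ (Kh_entriesIn (n+1) _ (single_entriesIn i (fun k => ⟨k, rfl⟩)))
  · -- (2) alternating on injective tuples
    intro i hi π
    have hiπ : Function.Injective (fun k => i (π k)) := fun a b hab => π.injective (hi hab)
    have h1 := hgrepr (fun k => i (π k))
    have h2 := hgrepr i
    have hts : (fun x => (fun k => i (π k)) ((Tuple.sort (fun k => i (π k))) x))
        = (fun x => i ((Tuple.sort i) x)) := by
      have hcp := Tuple.comp_perm_comp_sort_eq_comp_sort (f := i) (σ := π)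
      funext x
      exact congrFun hcp x
    have hperm : π * (Tuple.sort (fun k => i (π k))) = Tuple.sort i := by
      apply Equiv.ext
      intro x
      apply hi
      exact congrFun hts x
    have hsign : ((Equiv.Perm.sign (Tuple.sort (fun k => i (π k))) : ℤˣ) : ℤ)
        = ((Equiv.Perm.sign π : ℤˣ) : ℤ) * ((Equiv.Perm.sign (Tuple.sort i) : ℤˣ) : ℤ) := by
      have hperm2 : Tuple.sort (fun k => i (π k)) = π⁻¹ * Tuple.sort i := by
        rw [← hperm]; group
      rw [hperm2, map_mul, Units.val_mul, Equiv.Perm.sign_inv]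
    have ha1 : altT (fun k => i (π k))
        = ((Equiv.Perm.sign (Tuple.sort (fun k => i (π k))) : ℤˣ) : ℤ) •
            Finsupp.single (fun x => i ((Tuple.sort i) x)) (1:ℤ) := by
      rw [altT, if_pos hiπ, hts]
    have ha2 : altT i
        = ((Equiv.Perm.sign (Tuple.sort i) : ℤˣ) : ℤ) •
            Finsupp.single (fun x => i ((Tuple.sort i) x)) (1:ℤ) := by
      rw [altT, if_pos hi]
    rw [h1, h2, ha1, ha2]
    simp only [map_smul]
    rw [hsign, smul_add, smul_smul]
    have hcancel : ∀ x b' b : A, x + b' - (x + b) = b' - b := by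
      intro x b' b; abel
    rw [hcancel]
    refine AddSubgroup.sub_mem _ ?_ ?_
    · exact hKmem i _ (Kh_entriesIn (n+1) _ (single_entriesIn _ (fun k => ⟨π k, rfl⟩)))
    · exact AddSubgroup.zsmul_mem _
        (hKmem i _ (Kh_entriesIn (n+1) _ (single_entriesIn i (fun k => ⟨k, rfl⟩)))) _
  · -- (3) g is a cocycle
    intro i
    have hgface : ∀ j : Fin (n+2), g (fun k => i (j.succAbove k))
        = f (fun k => i (j.succAbove k))
          - pairF (Kh n (bd (Finsupp.single (fun k => i (j.succAbove k)) 1))) := by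
      intro j
      exact hgrepr2 (fun k => i (j.succAbove k))
    have e2 : ∑ j : Fin (n+2),
        (-1:ℤ)^(j:ℕ) • pairF (Kh n (bd (Finsupp.single (fun k => i (j.succAbove k)) (1:ℤ)))) = 0 := by
      have e3 : ∑ j : Fin (n+2),
          (-1:ℤ)^(j:ℕ) • pairF (Kh n (bd (Finsupp.single (fun k => i (j.succAbove k)) (1:ℤ))))
          = pairF (Kh n (bd (bd (Finsupp.single i (1:ℤ))))) := by
        rw [bd_single (t := i), map_sum, map_sum, map_sum]
        apply Finset.sum_congr rfl
        intro j _
        rw [map_smul, map_smul, map_smul]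
        rfl
      rw [e3, bd_bd, map_zero, map_zero]
    have e4 : (∑ j : Fin (n+2), (-1:ℤ)^(j:ℕ) • g (fun k => i (j.succAbove k)))
        = (∑ j : Fin (n+2), (-1:ℤ)^(j:ℕ) • f (fun k => i (j.succAbove k)))
          - ∑ j : Fin (n+2),
              (-1:ℤ)^(j:ℕ) • pairF (Kh n (bd (Finsupp.single (fun k => i (j.succAbove k)) (1:ℤ)))) := by
      rw [← Finset.sum_sub_distrib]
      apply Finset.sum_congr rfl
      intro j _
      rw [hgface j, smul_sub]
    rw [e4, e2, sub_zero]
    exact hf i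
  · -- (4) cohomologous
    intro i
    generalize hS : (∑ j : Fin (n+1), (-1:ℤ)^(j:ℕ) • h (fun k => i (j.succAbove k))) = S
    have hgi : g i = f i - S := by rw [← hS]
    rw [hgi]
    have : f i - (f i - S) - S = 0 := by abel
    rw [this]
    exact zero_mem _
end

section
/- Let A be an abelian group, (A_i)_{i∈I} a family of subgroups, and n a positive integer. Let g be an alternating n-cochain — g(i₀,…,iₙ) ∈ A_{i₀} + ⋯ + A_{iₙ} whenever the tuple has a repeated entry, and g(i_{π(0)},…,i_{π(n)}) ≡ sign(π) · g(i₀,…,iₙ) modulo A_{i₀} + ⋯ + A_{iₙ} for every permutation π of {0,…,n} — and suppose g is a coboundary: there is a family x indexed by n-tuples with Σ_{j=0}^{n} (−1)^j x(i₀,…,î_j,…,iₙ) − g(i₀,…,iₙ) ∈ A_{i₀} + ⋯ + A_{iₙ} for all tuples. Then g is the coboundary of an alternating cochain: there exists a family y indexed by n-tuples which vanishes modulo the corresponding subgroup sums on tuples with repeated entries, satisfies y(i∘π) ≡ sign(π)·y(i) modulo the corresponding subgroup sums for all permutations π, and Σ_{j=0}^{n} (−1)^j y(i₀,…,î_j,…,iₙ)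 − g(i₀,…,iₙ) ∈ A_{i₀} + ⋯ + A_{iₙ} for all tuples. -/
open Equiv Equiv.Perm

section Aux

variable {A : Type*} [AddCommGroup A] {I : Type*}

/-- The alternating-sum coboundary of a cochain. -/
private def altD {n : ℕ} (y : (Fin (n + 1) → I) → A) (i : Fin (n + 2) → I) : A :=
  ∑ j : Fin (n + 2), (-1 : ℤ) ^ (j : ℕ) • y (fun k => i (j.succAbove k))

/-- Swapping two adjacent indices commutes appropriately with `succAbove`. -/
private lemma swap_succAbove_castSucc {n : ℕ} (t : Fin (n + 1)) (k : Fin (n + 1)) :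
    Equiv.swap t.castSucc t.succ (t.castSucc.succAbove k) = t.succ.succAbove k := by
  rcases lt_trichotomy k t with h | rfl | h
  · have h1 : k.castSucc < t.castSucc := Fin.castSucc_lt_castSucc_iff.mpr h
    have h2 : k.castSucc < t.succ := lt_trans h1 (Fin.castSucc_lt_succ (i := t))
    rw [Fin.succAbove_of_castSucc_lt _ _ h1, Fin.succAbove_of_castSucc_lt _ _ h2,
      Equiv.swap_apply_of_ne_of_ne h1.ne h2.ne]
  · rw [Fin.succAbove_of_le_castSucc _ _ le_rfl, Equiv.swap_apply_right,
      Fin.succAbove_of_castSucc_lt _ _ (Fin.castSucc_lt_succ (i := k))]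
  · have h1 : t.castSucc ≤ k.castSucc := (Fin.castSucc_lt_castSucc_iff.mpr h).le
    have h2 : t.succ ≤ k.castSucc := Fin.succ_le_castSucc_iff.mpr h
    rw [Fin.succAbove_of_le_castSucc _ _ h1, Fin.succAbove_of_le_castSucc _ _ h2,
      Equiv.swap_apply_of_ne_of_ne (lt_of_le_of_lt h1 (Fin.castSucc_lt_succ (i := k))).ne'
        (fun hh => h.ne' (Fin.succ_injective _ hh))]

private lemma swap_succAbove_succ {n : ℕ} (t : Fin (n + 1)) (k : Fin (n + 1)) :
    Equiv.swap t.castSucc t.succ (t.succ.succAbove k) = t.castSucc.succAbove k := by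
  conv_lhs => rw [← swap_succAbove_castSucc t k]
  rw [Equiv.swap_apply_self]

/-- A transposition avoiding `j` induces a transposition on faces through `succAbove j`. -/
private lemma exists_swap_succAbove {n : ℕ} (a b j : Fin (n + 2)) (hab : a ≠ b)
    (hja : j ≠ a) (hjb : j ≠ b) :
    ∃ τ' : Equiv.Perm (Fin (n + 1)), Equiv.Perm.sign τ' = -1 ∧
      ∀ k, Equiv.swap a b (j.succAbove k) = j.succAbove (τ' k) := by
  obtain ⟨a', ha'⟩ := Fin.exists_succAbove_eq (Ne.symm hja)
  obtain ⟨b', hb'⟩ := Fin.exists_succAbove_eq (Ne.symm hjb)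
  have hab' : a' ≠ b' := fun h => hab (by rw [← ha', ← hb', h])
  refine ⟨Equiv.swap a' b', Equiv.Perm.sign_swap hab', fun k => ?_⟩
  rcases eq_or_ne k a' with rfl | hka
  · rw [ha', Equiv.swap_apply_left, Equiv.swap_apply_left, hb']
  rcases eq_or_ne k b' with rfl | hkb
  · rw [hb', Equiv.swap_apply_right, Equiv.swap_apply_right, ha']
  · rw [Equiv.swap_apply_of_ne_of_ne
      (fun h => hka (Fin.succAbove_right_injective (h.trans ha'.symm)))
      (fun h => hkb (Fin.succAbove_right_injective (h.trans hb'.symm))),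
      Equiv.swap_apply_of_ne_of_ne hka hkb]

variable {n : ℕ} (y : (Fin (n + 1) → I) → A)

/-- The coboundary of a strictly alternating cochain changes sign under
an adjacent transposition. -/
private lemma altD_swap
    (hyalt : ∀ (i : Fin (n + 1) → I) (π : Equiv.Perm (Fin (n + 1))),
      y (fun k => i (π k)) = ((Equiv.Perm.sign π : ℤˣ) : ℤ) • y i)
    (t : Fin (n + 1)) (i : Fin (n + 2) → I) :
    altD y (fun k => i (Equiv.swap t.castSucc t.succ k)) = - altD y i := by
  have step : ∀ j : Fin (n + 2),
      (-1 : ℤ) ^ (j : ℕ) • y (fun k => i (Equiv.swap t.castSucc t.succ (j.succAbove k)))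
      = -((-1 : ℤ) ^ ((Equiv.swap t.castSucc t.succ j : Fin (n + 2)) : ℕ) •
          y (fun k => i ((Equiv.swap t.castSucc t.succ j).succAbove k))) := by
    intro j
    rcases eq_or_ne j t.castSucc with rfl | hjc
    · rw [Equiv.swap_apply_left]
      have h1 : (fun k => i (Equiv.swap t.castSucc t.succ (t.castSucc.succAbove k)))
          = fun k => i (t.succ.succAbove k) := by
        funext k; rw [swap_succAbove_castSucc]
      rw [h1, Fin.coe_castSucc, Fin.val_succ, pow_succ]
      simp
    rcases eq_or_ne j t.succ with rfl | hjs
    · rw [Equiv.swap_apply_right]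
      have h1 : (fun k => i (Equiv.swap t.castSucc t.succ (t.succ.succAbove k)))
          = fun k => i (t.castSucc.succAbove k) := by
        funext k; rw [swap_succAbove_succ]
      rw [h1, Fin.coe_castSucc, Fin.val_succ, pow_succ]
      simp
    · have hτj : Equiv.swap t.castSucc t.succ j = j := Equiv.swap_apply_of_ne_of_ne hjc hjs
      obtain ⟨τ', hsign, hcomm⟩ := exists_swap_succAbove t.castSucc t.succ j
        (Fin.castSucc_lt_succ (i := t)).ne hjc hjs
      have h1 : (fun k => i (Equiv.swap t.castSucc t.succ (j.succAbove k)))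
          = fun k => (fun l => i (j.succAbove l)) (τ' k) := by
        funext k; rw [hcomm k]
      rw [hτj, h1, hyalt (fun l => i (j.succAbove l)) τ', hsign]
      simp [smul_smul]
  calc altD y (fun k => i (Equiv.swap t.castSucc t.succ k))
      = ∑ j : Fin (n + 2),
          (-1 : ℤ) ^ (j : ℕ) • y (fun k => i (Equiv.swap t.castSucc t.succ (j.succAbove k))) := rfl
    _ = ∑ j : Fin (n + 2), -((-1 : ℤ) ^ ((Equiv.swap t.castSucc t.succ j : Fin (n + 2)) : ℕ) •
          y (fun k => i ((Equiv.swap t.castSucc t.succ j).succAbove k))) :=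
        Finset.sum_congr rfl fun j _ => step j
    _ = -∑ j : Fin (n + 2), (-1 : ℤ) ^ ((Equiv.swap t.castSucc t.succ j : Fin (n + 2)) : ℕ) •
          y (fun k => i ((Equiv.swap t.castSucc t.succ j).succAbove k)) := by
        rw [Finset.sum_neg_distrib]
    _ = - altD y i := by
        rw [Equiv.sum_comp (Equiv.swap t.castSucc t.succ)
          (fun j => (-1 : ℤ) ^ (j : ℕ) • y (fun k => i (j.succAbove k)))]
        rfl

/-- The coboundary of a strictly alternating cochain is strictly alternating. -/
private lemma altD_perm
    (hyalt : ∀ (i : Fin (n + 1) → I) (π : Equiv.Perm (Fin (n + 1))),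
      y (fun k => i (π k)) = ((Equiv.Perm.sign π : ℤˣ) : ℤ) • y i)
    (π : Equiv.Perm (Fin (n + 2))) (i : Fin (n + 2) → I) :
    altD y (fun k => i (π k)) = ((Equiv.Perm.sign π : ℤˣ) : ℤ) • altD y i := by
  have hmem : π ∈ Submonoid.closure
      (Set.range fun t : Fin (n + 1) => Equiv.swap t.castSucc t.succ) := by
    rw [Equiv.Perm.mclosure_swap_castSucc_succ]; exact Submonoid.mem_top π
  induction hmem using Submonoid.closure_induction generalizing i with
  | mem σ hσ =>
      obtain ⟨t, rfl⟩ := hσ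
      rw [altD_swap y hyalt t i, Equiv.Perm.sign_swap (Fin.castSucc_lt_succ (i := t)).ne]
      simp
  | one => simp
  | mul σ ρ hσm hρm hσ hρ =>
      calc altD y (fun k => i ((σ * ρ) k))
          = ((Equiv.Perm.sign ρ : ℤˣ) : ℤ) • altD y (fun l => i (σ l)) := hρ (fun l => i (σ l))
        _ = ((Equiv.Perm.sign ρ : ℤˣ) : ℤ) • (((Equiv.Perm.sign σ : ℤˣ) : ℤ) • altD y i) := by
            rw [hσ i]
        _ = ((Equiv.Perm.sign (σ * ρ) : ℤˣ) : ℤ) • altD y i := by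
            rw [smul_smul, map_mul, Units.val_mul, mul_comm]

/-- The coboundary of a cochain vanishing on non-injective tuples kills tuples
with two equal adjacent entries. -/
private lemma altD_zero
    (hy0 : ∀ i : Fin (n + 1) → I, ¬ Function.Injective i → y i = 0)
    (i : Fin (n + 2) → I) (h01 : i 0 = i 1) : altD y i = 0 := by
  unfold altD
  rw [Fin.sum_univ_succ, Fin.sum_univ_succ]
  have e0 : (fun k : Fin (n + 1) => i ((0 : Fin (n + 2)).succAbove k))
      = fun k => i k.succ := by
    funext k; rw [Fin.zero_succAbove]
  have e1 : (fun k : Fin (n + 1) => i (((0 : Fin (n + 1)).succ).succAbove k))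
      = fun k => i k.succ := by
    funext k
    rw [Fin.succ_zero_eq_one]
    rcases eq_or_ne k 0 with rfl | hk
    · rw [Fin.succAbove_of_castSucc_lt _ _ (by rw [Fin.castSucc_zero]; exact Fin.one_pos')]
      rw [Fin.castSucc_zero, h01, Fin.succ_zero_eq_one]
    · rw [Fin.succAbove_of_le_castSucc]
      rw [Fin.le_def, Fin.val_one, Fin.coe_castSucc]
      have : k.val ≠ 0 := fun h => hk (Fin.ext h)
      omega
  have e2 : ∀ j : Fin n, (-1 : ℤ) ^ ((j.succ.succ : Fin (n + 2)) : ℕ) •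
      y (fun k => i ((j.succ.succ : Fin (n + 2)).succAbove k)) = 0 := by
    intro j
    have hn1 : 0 < n := j.pos
    have hface0 : (j.succ.succ : Fin (n + 2)).succAbove (0 : Fin (n + 1)) = 0 := by
      rw [Fin.succAbove_of_castSucc_lt _ _ (by rw [Fin.castSucc_zero']; exact Fin.succ_pos _),
        Fin.castSucc_zero']
    have hface1 : (j.succ.succ : Fin (n + 2)).succAbove (1 : Fin (n + 1)) = 1 := by
      have h2 : (1 : Fin (n + 1)).castSucc < (j.succ.succ : Fin (n + 2)) := by
        rw [Fin.lt_def, Fin.coe_castSucc, Fin.val_one', Fin.val_succ, Fin.val_succ]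
        have := Nat.mod_eq_of_lt (show 1 < n + 1 by omega)
        omega
      rw [Fin.succAbove_of_castSucc_lt _ _ h2]
      rw [Fin.ext_iff, Fin.coe_castSucc, Fin.val_one', Fin.val_one]
      have := Nat.mod_eq_of_lt (show 1 < n + 1 by omega)
      omega
    have hne : (0 : Fin (n + 1)) ≠ 1 := by
      rw [Fin.ne_iff_vne, Fin.val_zero, Fin.val_one']
      have := Nat.mod_eq_of_lt (show 1 < n + 1 by omega)
      omega
    have hni : ¬ Function.Injective (fun k => i ((j.succ.succ : Fin (n + 2)).succAbove k)) := by
      intro hinj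
      exact hne (hinj (show i ((j.succ.succ : Fin (n + 2)).succAbove 0)
        = i ((j.succ.succ : Fin (n + 2)).succAbove 1) by
          rw [hface0, hface1, h01]))
    rw [hy0 _ hni, smul_zero]
  rw [Finset.sum_congr rfl (fun j _ => e2 j), Finset.sum_const_zero, e0, e1]
  simp [Fin.val_succ]

end Aux

section Aux2

variable {A : Type*} [AddCommGroup A] {I : Type*} [LinearOrder I] {n : ℕ}

open Classical in
/-- The alternation of a cochain `x`, using a linear order on the index type. -/
private noncomputable def altY (x : (Fin n → I) → A) (i : Fin n → I) : A :=
  if Function.Injective i then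
    ((Equiv.Perm.sign (Tuple.sort i) : ℤˣ) : ℤ) • x (i ∘ Tuple.sort i)
  else 0

private lemma altY_of_not_injective (x : (Fin n → I) → A) {i : Fin n → I}
    (hi : ¬ Function.Injective i) : altY x i = 0 := by
  rw [altY, if_neg hi]

private lemma altY_of_monotone (x : (Fin n → I) → A) {i : Fin n → I}
    (hi : Function.Injective i) (hm : Monotone i) : altY x i = x i := by
  rw [altY, if_pos hi, Tuple.sort_eq_refl_iff_monotone.mpr hm]
  simp

private lemma altY_perm (x : (Fin n → I) → A) (i : Fin n → I) (π : Equiv.Perm (Fin n)) :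
    altY x (fun k => i (π k)) = ((Equiv.Perm.sign π : ℤˣ) : ℤ) • altY x i := by
  have hcomp : (fun k => i (π k)) = i ∘ ⇑π := rfl
  by_cases hi : Function.Injective i
  · have hiπ : Function.Injective (i ∘ ⇑π) := hi.comp π.injective
    have hkey : Tuple.sort (i ∘ ⇑π) = π⁻¹ * Tuple.sort i := by
      have h := Tuple.comp_perm_comp_sort_eq_comp_sort (σ := π) (f := i)
      apply Equiv.ext
      intro k
      have h2 : π (Tuple.sort (i ∘ ⇑π) k) = Tuple.sort i k := hi (congrFun h k)
      have := congrArg (⇑π⁻¹) h2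
      simpa using this
    rw [hcomp, altY, altY, if_pos hiπ, if_pos hi,
      Tuple.comp_perm_comp_sort_eq_comp_sort, hkey, map_mul, Equiv.Perm.sign_inv,
      Units.val_mul, mul_smul]
  · have hiπ : ¬ Function.Injective (i ∘ ⇑π) := by
      intro h
      apply hi
      have h2 : Function.Injective ((i ∘ ⇑π) ∘ ⇑π.symm) := h.comp π.symm.injective
      have h3 : (i ∘ ⇑π) ∘ ⇑π.symm = i := by
        funext l; simp
      rwa [h3] at h2
    rw [hcomp, altY, altY, if_neg hiπ, if_neg hi, smul_zero]

end Aux2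

/-- **An alternating coboundary is the coboundary of an alternating cochain.**
Let `(A_i)_{i∈I}` be a family of subgroups of an abelian group `A` and `n > 0`.
If `g` is an alternating `n`-cochain (vanishing modulo `A_{i₀} + ⋯ + A_{iₙ}` on
tuples with a repeated entry, with `g(i∘π) ≡ sign(π) • g(i)` for every
permutation `π`) which is the coboundary of some cochain `x`, then `g` is the
coboundary of an alternating cochain `y`. -/
theorem alternating_coboundary_of_alternating
    {A : Type*} [AddCommGroup A] {I : Type*} (Ai : I → AddSubgroup A)
    (n : ℕ) (hn : 0 < n) (g : (Fin (n + 1) → I) → A)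
    (hrep : ∀ i : Fin (n + 1) → I, ¬ Function.Injective i → g i ∈ ⨆ k, Ai (i k))
    (halt : ∀ (i : Fin (n + 1) → I) (π : Equiv.Perm (Fin (n + 1))),
      g (fun k => i (π k)) - ((Equiv.Perm.sign π : ℤ) • g i) ∈ ⨆ k, Ai (i k))
    (hcob : ∃ x : (Fin n → I) → A, ∀ i : Fin (n + 1) → I,
      (∑ j : Fin (n + 1), (-1 : ℤ) ^ (j : ℕ) • x (fun k => i (j.succAbove k))) - g i
        ∈ ⨆ k, Ai (i k)) :
    ∃ y : (Fin n → I) → A,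
      (∀ i : Fin n → I, ¬ Function.Injective i → y i ∈ ⨆ k, Ai (i k)) ∧
      (∀ (i : Fin n → I) (π : Equiv.Perm (Fin n)),
        y (fun k => i (π k)) - ((Equiv.Perm.sign π : ℤ) • y i) ∈ ⨆ k, Ai (i k)) ∧
      (∀ i : Fin (n + 1) → I,
        (∑ j : Fin (n + 1), (-1 : ℤ) ^ (j : ℕ) • y (fun k => i (j.succAbove k))) - g i
          ∈ ⨆ k, Ai (i k)) := by
  classical
  obtain ⟨x, hx⟩ := hcob
  obtain ⟨m, rfl⟩ : ∃ m, n = m + 1 := ⟨n - 1, (Nat.succ_pred_eq_of_pos hn).symm⟩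
  letI : LinearOrder I := IsWellOrder.linearOrder WellOrderingRel
  refine ⟨altY x, fun i hi => ?_, fun i π => ?_, fun i => ?_⟩
  · rw [altY_of_not_injective x hi]
    exact zero_mem _
  · rw [altY_perm x i π, sub_self]
    exact zero_mem _
  · show altD (altY x) i - g i ∈ ⨆ k, Ai (i k)
    have hyalt : ∀ (f : Fin (m + 1) → I) (π : Equiv.Perm (Fin (m + 1))),
        altY x (fun k => f (π k)) = ((Equiv.Perm.sign π : ℤˣ) : ℤ) • altY x f :=
      fun f π => altY_perm x f π
    by_cases hi : Function.Injective i
    · set σ := Tuple.sort i with hσdef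
      have hs_mono : Monotone (i ∘ ⇑σ) := Tuple.monotone_sort i
      have hs_inj : Function.Injective (i ∘ ⇑σ) := hi.comp σ.injective
      have hDi : altD (altY x) i
          = ((Equiv.Perm.sign σ : ℤˣ) : ℤ) • altD (altY x) (i ∘ ⇑σ) := by
        have h1 := altD_perm (altY x) hyalt σ⁻¹ (i ∘ ⇑σ)
        have h2 : (fun k => (i ∘ ⇑σ) (σ⁻¹ k)) = i := by
          funext k; simp
        rw [h2, Equiv.Perm.sign_inv] at h1
        exact h1
      have h5 : (⨆ k, Ai ((i ∘ ⇑σ) k)) = ⨆ k, Ai (i k) :=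
        Equiv.iSup_comp (g := fun t => Ai (i t)) σ
      have hDs : altD (altY x) (i ∘ ⇑σ) - g (i ∘ ⇑σ) ∈ ⨆ k, Ai (i k) := by
        have h3 : altD (altY x) (i ∘ ⇑σ)
            = ∑ j : Fin (m + 2), (-1 : ℤ) ^ (j : ℕ) •
                x (fun k => (i ∘ ⇑σ) (j.succAbove k)) := by
          unfold altD
          refine Finset.sum_congr rfl fun j _ => ?_
          congr 1
          exact altY_of_monotone x
            (hs_inj.comp Fin.succAbove_right_injective)
            (hs_mono.comp (Fin.strictMono_succAbove j).monotone)
        rw [h3]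
        have h4 := hx (i ∘ ⇑σ)
        rwa [h5] at h4
      have hsg : g (i ∘ ⇑σ) - ((Equiv.Perm.sign σ : ℤ) • g i) ∈ ⨆ k, Ai (i k) := halt i σ
      have hunit : ((Equiv.Perm.sign σ : ℤˣ) : ℤ) * ((Equiv.Perm.sign σ : ℤˣ) : ℤ) = 1 := by
        rw [← Units.val_mul, Int.units_mul_self, Units.val_one]
      have key : altD (altY x) i - g i
          = ((Equiv.Perm.sign σ : ℤˣ) : ℤ) • (altD (altY x) (i ∘ ⇑σ) - g (i ∘ ⇑σ))
            + ((Equiv.Perm.sign σ : ℤˣ) : ℤ) •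
                (g (i ∘ ⇑σ) - ((Equiv.Perm.sign σ : ℤ) • g i)) := by
        rw [hDi, smul_sub, smul_sub, smul_smul, hunit, one_smul]
        abel
      rw [key]
      exact add_mem (AddSubgroup.zsmul_mem _ hDs _) (AddSubgroup.zsmul_mem _ hsg _)
    · obtain ⟨a, b, hiab, hab⟩ := Function.not_injective_iff.mp hi
      have h0b' : (0 : Fin (m + 2)) ≠ Equiv.swap 0 a b := by
        intro h
        apply hab
        have h2 := congrArg (Equiv.swap 0 a) h.symm
        rw [Equiv.swap_apply_self, Equiv.swap_apply_left] at h2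
        exact h2.symm
      set π : Equiv.Perm (Fin (m + 2)) :=
        Equiv.swap 0 a * Equiv.swap 1 (Equiv.swap 0 a b) with hπdef
      have hπ0 : π 0 = a := by
        rw [hπdef, Equiv.Perm.mul_apply,
          Equiv.swap_apply_of_ne_of_ne Fin.zero_ne_one' h0b', Equiv.swap_apply_left]
      have hπ1 : π 1 = b := by
        rw [hπdef, Equiv.Perm.mul_apply, Equiv.swap_apply_left, Equiv.swap_apply_self]
      have h01 : i (π 0) = i (π 1) := by rw [hπ0, hπ1]; exact hiab
      have hz : altD (altY x) (fun k => i (π k)) = 0 :=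
        altD_zero (altY x) (fun f hf => altY_of_not_injective x hf) _ h01
      have hp := altD_perm (altY x) hyalt π i
      rw [hz] at hp
      have hD0 : altD (altY x) i = 0 := by
        rcases Int.units_eq_one_or (Equiv.Perm.sign π) with h | h <;>
          rw [h] at hp <;> simpa using hp.symm
      rw [hD0, zero_sub]
      exact neg_mem (hrep i hi)
end
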